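/- arXiv:1007.0418 — 2 statements merged into one kernel-verified Lean document; each statement's English description precedes it below -/
import Mathlib

section
/- Let G be a finite graph and σ a nonempty independent set of vertices such that every independent set τ of G with at most r vertices can be extended by some vertex of σ (i.e., there is v ∈ σ with τ ∪ {v} independent). Then the independence complex I_G is (r−1)-connected. -/
attribute [local instance] Classical.propDecidable

/-- A finite abstract simplicial complex on vertex type `V`:
a downward-closed family of nonempty finite vertex sets. -/
structure ASC (V : Type) where
  faces : Set (Finset V)
  nonempty_of_mem : ∀ s ∈ faces, s.Nonempty
  down_closed : ∀ s ∈ faces, ∀ t : Finset V, t ⊆ s → t.Nonempty → t ∈ faces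

namespace ASC

variable {V : Type}

/-- The geometric realization of `K`, as a subspace of `V → ℝ`. -/
def space [Fintype V] (K : ASC V) : Type :=
  {f : V → ℝ // (∃ s ∈ K.faces, ∀ v, f v ≠ 0 → v ∈ s) ∧ (∀ v, 0 ≤ f v) ∧ ∑ v, f v = 1}

noncomputable instance [Fintype V] (K : ASC V) : TopologicalSpace K.space :=
  instTopologicalSpaceSubtype

/-- `K` is a clique (flag) complex: every nonempty vertex set which pairwise spans
edges of `K` is a face of `K`. -/
def IsClique (K : ASC V) : Prop :=
  ∀ s : Finset V, s.Nonempty →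
    (∀ v ∈ s, ∀ w ∈ s, ({v, w} : Finset V) ∈ K.faces) → s ∈ K.faces

/-- The closed star of a vertex `v`: faces `τ` with `τ ∪ {v}` a face. -/
def star (K : ASC V) (v : V) : ASC V where
  faces := {s | s ∈ K.faces ∧ insert v s ∈ K.faces}
  nonempty_of_mem s hs := K.nonempty_of_mem s hs.1
  down_closed s hs t hts htne :=
    ⟨K.down_closed s hs.1 t hts htne,
     K.down_closed _ hs.2 _ (Finset.insert_subset_insert v hts) (Finset.insert_nonempty _ _)⟩

/-- The intersection `⋂_{v ∈ σ} st_K(v)` of the stars of the vertices of `σ`. -/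
def interStars (K : ASC V) (σ : Finset V) : ASC V where
  faces := {s | s ∈ K.faces ∧ ∀ v ∈ σ, insert v s ∈ K.faces}
  nonempty_of_mem s hs := K.nonempty_of_mem s hs.1
  down_closed s hs t hts htne :=
    ⟨K.down_closed s hs.1 t hts htne, fun v hv =>
      K.down_closed _ (hs.2 v hv) _ (Finset.insert_subset_insert v hts)
        (Finset.insert_nonempty _ _)⟩

/-- The star cluster `SC_K(σ) = ⋃_{v ∈ σ} st_K(v)` of a simplex `σ`. -/
def starCluster (K : ASC V) (σ : Finset V) : ASC V where
  faces := {s | s ∈ K.faces ∧ ∃ v ∈ σ, insert v s ∈ K.faces}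
  nonempty_of_mem s hs := K.nonempty_of_mem s hs.1
  down_closed s hs t hts htne :=
    ⟨K.down_closed s hs.1 t hts htne, by
      obtain ⟨v, hv, hins⟩ := hs.2
      exact ⟨v, hv, K.down_closed _ hins _ (Finset.insert_subset_insert v hts)
        (Finset.insert_nonempty _ _)⟩⟩

/-- Intersection of two simplicial complexes. -/
def inter (K₁ K₂ : ASC V) : ASC V where
  faces := K₁.faces ∩ K₂.faces
  nonempty_of_mem s hs := K₁.nonempty_of_mem s hs.1
  down_closed s hs t hts htne :=
    ⟨K₁.down_closed s hs.1 t hts htne, K₂.down_closed s hs.2 t hts htne⟩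

end ASC

/-- The relation on `X × [0,1]` collapsing `X × {0}` and `X × {1}` to points. -/
def SuspRel (X : Type) [TopologicalSpace X] :
    X × unitInterval → X × unitInterval → Prop := fun a b =>
  (a.2 = 0 ∧ b.2 = 0) ∨ (a.2 = 1 ∧ b.2 = 1)

/-- The unreduced suspension of a topological space. -/
def Susp (X : Type) [TopologicalSpace X] : Type := Quot (SuspRel X)

noncomputable instance Susp.ts (X : Type) [TopologicalSpace X] : TopologicalSpace (Susp X) :=
  instTopologicalSpaceQuot

/-- The independence complex of a graph: faces are the nonempty independent vertex sets. -/
def SimpleGraph.indepComplex (G : SimpleGraph V) : ASC V where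
  faces := {s | s.Nonempty ∧ ∀ v ∈ s, ∀ w ∈ s, ¬ G.Adj v w}
  nonempty_of_mem s hs := hs.1
  down_closed s hs t hts htne := ⟨htne, fun v hv w hw => hs.2 v (hts hv) w (hts hw)⟩

/-- `X` is `n`-connected (`n : ℤ`): nonempty when `n ≥ -1`, and all homotopy
groups `π_k` for `0 ≤ k ≤ n` are trivial (triviality of `π_0` meaning
path-connectedness). -/
def NConnected (n : ℤ) (X : Type) [TopologicalSpace X] : Prop :=
  (-1 ≤ n → Nonempty X) ∧
    ∀ k : ℕ, (k : ℤ) ≤ n → ∀ x : X, Subsingleton (HomotopyGroup (Fin k) X x)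

noncomputable section

namespace St16

open scoped unitInterval Topology
open Finset

/-! ### clamp -/

def cl (s : ℝ) : ℝ := max 0 (min 1 s)

lemma cl_nonneg (s : ℝ) : 0 ≤ cl s := le_max_left _ _

lemma cl_le_one (s : ℝ) : cl s ≤ 1 := max_le zero_le_one (min_le_left _ _)

lemma cl_of_nonpos {s : ℝ} (h : s ≤ 0) : cl s = 0 := by
  unfold cl
  rw [max_eq_left]
  exact le_trans (min_le_right _ _) h

lemma cl_of_one_le {s : ℝ} (h : 1 ≤ s) : cl s = 1 := by
  unfold cl
  rw [min_eq_left h, max_eq_right zero_le_one]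

lemma cl_of_mem {s : ℝ} (h0 : 0 ≤ s) (h1 : s ≤ 1) : cl s = s := by
  unfold cl
  rw [min_eq_right h1, max_eq_right h0]

lemma continuous_cl : Continuous cl :=
  continuous_const.max (continuous_const.min continuous_id)

/-- clamp into the unit interval -/
def toI (s : ℝ) : I := ⟨cl s, cl_nonneg s, cl_le_one s⟩

lemma continuous_toI : Continuous toI :=
  continuous_cl.subtype_mk _

/-! ### fold max / min helpers -/

variable {k : ℕ}

def mx (u : Fin k → ℝ) : ℝ := (univ : Finset (Fin k)).fold max 0 u

lemma mx_nonneg (u : Fin k → ℝ) : 0 ≤ mx u := (le_fold_max _).2 (Or.inl le_rfl)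

lemma le_mx (u : Fin k → ℝ) (i : Fin k) : u i ≤ mx u :=
  (le_fold_max _).2 (Or.inr ⟨i, mem_univ i, le_rfl⟩)

lemma mx_le {u : Fin k → ℝ} {c : ℝ} (h0 : 0 ≤ c) (h : ∀ i, u i ≤ c) : mx u ≤ c :=
  (fold_max_le _).2 ⟨h0, fun i _ => h i⟩

lemma mx_lt {u : Fin k → ℝ} {c : ℝ} (h0 : 0 < c) (h : ∀ i, u i < c) : mx u < c :=
  (fold_max_lt _).2 ⟨h0, fun i _ => h i⟩

lemma continuous_fold_max {α : Type*} [TopologicalSpace α] (s : Finset (Fin k))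
    (F : Fin k → α → ℝ) (hF : ∀ i, Continuous (F i)) (b : ℝ) :
    Continuous fun a => s.fold max b (fun i => F i a) := by
  classical
  induction s using Finset.induction_on with
  | empty => simpa using continuous_const
  | @insert i s hi ih =>
      simp only [Finset.fold_insert hi]
      exact (hF _).max ih

lemma continuous_fold_min {α : Type*} [TopologicalSpace α] (s : Finset (Fin k))
    (F : Fin k → α → ℝ) (hF : ∀ i, Continuous (F i)) (b : ℝ) :
    Continuous fun a => s.fold min b (fun i => F i a) := by
  classical
  induction s using Finset.induction_on with
  | empty => simpa using continuous_const
  | @insert i s hi ih =>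
      simp only [Finset.fold_insert hi]
      exact (hF _).min ih

lemma continuous_mx {α : Type*} [TopologicalSpace α] (F : α → Fin k → ℝ)
    (hF : Continuous F) : Continuous fun a => mx (F a) := by
  have : ∀ i : Fin k, Continuous fun a => F a i := fun i => (continuous_apply i).comp hF
  exact continuous_fold_max univ (fun i a => F a i) this 0

/-! ### distance to the boundary of the cube -/

def md (z : Fin k → I) : ℝ :=
  (univ : Finset (Fin k)).fold min (1/2) (fun i => min (z i : ℝ) (1 - (z i : ℝ)))

lemma md_nonneg (z : Fin k → I) : 0 ≤ md z :=
  (le_fold_min _).2 ⟨by norm_num, fun i _ => le_min (z i).2.1 (by linarith [(z i).2.2])⟩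

lemma md_le_half (z : Fin k → I) : md z ≤ 1/2 :=
  (fold_min_le _).2 (Or.inl le_rfl)

lemma md_boundary {z : Fin k → I} (h : z ∈ Cube.boundary (Fin k)) : md z = 0 := by
  obtain ⟨i, hi⟩ := h
  refine le_antisymm ((fold_min_le _).2 (Or.inr ⟨i, mem_univ i, ?_⟩)) (md_nonneg z)
  rcases hi with hi | hi <;> rw [hi] <;> norm_num

lemma md_small {z : Fin k → I} {c : ℝ} (h : md z ≤ c) (hc : c < 1/2) :
    ∃ i, (z i : ℝ) ≤ c ∨ 1 - (z i : ℝ) ≤ c := by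
  by_contra hcon
  push_neg at hcon
  have : c < md z := (lt_fold_min _).2 ⟨hc, fun i _ => lt_min (hcon i).1 (hcon i).2⟩
  linarith

lemma md_le_md_add {z z' : Fin k → I} {ε : ℝ} (hε : 0 ≤ ε)
    (h : ∀ i, |(z i : ℝ) - (z' i : ℝ)| ≤ ε) : md z' ≤ md z + ε := by
  rcases (fold_min_le _).1 (le_refl (md z)) with h12 | ⟨i, _, hi⟩
  · exact le_trans (md_le_half z') (by linarith)
  · refine le_trans ((fold_min_le _).2 (Or.inr ⟨i, mem_univ i, ?_⟩)) (by rfl)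
    have h1 := abs_le.1 (h i)
    rcases min_le_iff.1 hi with h2 | h2
    · exact le_trans (min_le_left _ _) (by linarith [h1.1, h1.2])
    · exact le_trans (min_le_right _ _) (by linarith [h1.1, h1.2])

lemma continuous_md : Continuous (md (k := k)) := by
  refine continuous_fold_min univ _ (fun i => ?_) _
  have : Continuous fun z : Fin k → I => (z i : ℝ) :=
    continuous_subtype_val.comp (continuous_apply i)
  exact this.min (continuous_const.sub this)

/-! ### the Kuhn hat function -/

def hat (u : Fin k → ℝ) : ℝ := max 0 (1 - mx u - mx (fun i => - u i))

lemma hat_nonneg (u : Fin k → ℝ) : 0 ≤ hat u := le_max_left _ _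

lemma continuous_hat {α : Type*} [TopologicalSpace α] (F : α → Fin k → ℝ)
    (hF : Continuous F) : Continuous fun a => hat (F a) := by
  have h1 : Continuous fun a => mx (F a) := continuous_mx F hF
  have h2 : Continuous fun a => mx (fun i => - F a i) := by
    refine continuous_mx (fun a i => - F a i) ?_
    exact continuous_pi fun i => ((continuous_apply i).comp hF).neg
  exact continuous_const.max ((continuous_const.sub h1).sub h2)

lemma hat_pos {u : Fin k → ℝ} (h0 : ∀ i, 0 ≤ u i) (h1 : ∀ i, u i < 1) :
    0 < hat u := by
  have hneg : mx (fun i => - u i) = 0 :=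
    le_antisymm (mx_le le_rfl fun i => neg_nonpos.2 (h0 i)) (mx_nonneg _)
  have hlt : mx u < 1 := mx_lt one_pos h1
  have : 0 < 1 - mx u - mx (fun i => - u i) := by rw [hneg]; linarith
  exact lt_of_lt_of_le this (le_max_right _ _)

lemma hat_eq_zero {u : Fin k → ℝ} (i : Fin k) (h : 1 ≤ |u i|) : hat u = 0 := by
  have : 1 - mx u - mx (fun i => - u i) ≤ 0 := by
    rcases abs_le.1 (le_refl |u i|) with _
    rcases le_abs.1 h with h' | h'
    · have := le_mx u i
      have := mx_nonneg (fun i => - u i)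
      linarith
    · have := le_mx (fun j => - u j) i
      have := mx_nonneg u
      linarith
  exact max_eq_left this

lemma hat_pos_pair {u : Fin k → ℝ} (h : 0 < hat u) (i j : Fin k) :
    u j - u i < 1 := by
  have h' : 0 < 1 - mx u - mx (fun i => - u i) := by
    by_contra hc
    push_neg at hc
    rw [hat, max_eq_left hc] at h
    exact lt_irrefl 0 h
  have h1 := le_mx u j
  have h2 := le_mx (fun i => - u i) i
  linarith



/-! ### the grid partition of unity -/

def box (k N : ℕ) : Finset (Fin k → ℤ) := Finset.Icc 0 (fun _ => N)

def gridPU (N : ℕ) (p : Fin k → ℤ) (z : Fin k → I) : ℝ :=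
  hat (fun i => N * (z i : ℝ) - p i)

lemma gridPU_nonneg (N : ℕ) (p : Fin k → ℤ) (z : Fin k → I) : 0 ≤ gridPU N p z :=
  hat_nonneg _

lemma continuous_gridPU (N : ℕ) (p : Fin k → ℤ) :
    Continuous fun z : Fin k → I => gridPU N p z := by
  refine continuous_hat _ ?_
  refine continuous_pi fun i => ?_
  exact (continuous_const.mul
    (continuous_subtype_val.comp (continuous_apply i))).sub continuous_const

lemma gridPU_close {N : ℕ} {p : Fin k → ℤ} {z : Fin k → I}
    (h : gridPU N p z ≠ 0) (i : Fin k) : |(N : ℝ) * (z i : ℝ) - p i| < 1 := by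
  by_contra hc
  push_neg at hc
  exact h (hat_eq_zero i hc)

def flr (N : ℕ) (z : Fin k → I) : Fin k → ℤ := fun i => ⌊(N : ℝ) * (z i : ℝ)⌋

lemma flr_mem_box (N : ℕ) (z : Fin k → I) : flr N z ∈ box k N := by
  rw [box, Finset.mem_Icc]
  constructor <;> intro i
  · simp only [Pi.zero_apply, flr]
    refine Int.le_floor.2 ?_
    push_cast
    exact mul_nonneg (Nat.cast_nonneg N) (z i).2.1
  · simp only [flr]
    have : (N : ℝ) * (z i : ℝ) ≤ N := by
      have := (z i).2.2
      nlinarith [(z i).2.1, Nat.cast_nonneg (α := ℝ) N]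
    calc ⌊(N : ℝ) * (z i : ℝ)⌋ ≤ ⌊(N : ℝ)⌋ := Int.floor_le_floor this
    _ = N := by simp

lemma gridPU_flr_pos (N : ℕ) (z : Fin k → I) : 0 < gridPU N (flr N z) z := by
  refine hat_pos (fun i => ?_) (fun i => ?_)
  · exact sub_nonneg.2 (Int.floor_le _)
  · have := Int.sub_one_lt_floor ((N : ℝ) * (z i : ℝ))
    simp only [flr]
    linarith

def den (N : ℕ) (z : Fin k → I) : ℝ := ∑ p ∈ box k N, gridPU N p z

lemma den_pos (N : ℕ) (z : Fin k → I) : 0 < den N z :=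
  lt_of_lt_of_le (gridPU_flr_pos N z)
    (Finset.single_le_sum (fun p _ => gridPU_nonneg N p z) (flr_mem_box N z))

lemma continuous_den (N : ℕ) : Continuous fun z : Fin k → I => den N z :=
  continuous_finset_sum _ fun p _ => continuous_gridPU N p

/-- the set of active grid points at `z` -/
def posSet (N : ℕ) (z : Fin k → I) : Finset (Fin k → ℤ) :=
  (box k N).filter fun p => gridPU N p z ≠ 0

lemma posSet_nonempty (N : ℕ) (z : Fin k → I) : (posSet N z).Nonempty :=
  ⟨flr N z, Finset.mem_filter.2 ⟨flr_mem_box N z, ne_of_gt (gridPU_flr_pos N z)⟩⟩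

lemma posSet_chain {N : ℕ} {z : Fin k → I} {p q : Fin k → ℤ}
    (hp : p ∈ posSet N z) (hq : q ∈ posSet N z) : (∀ i, p i ≤ q i) ∨ (∀ i, q i ≤ p i) := by
  have hp' := (Finset.mem_filter.1 hp).2
  have hq' := (Finset.mem_filter.1 hq).2
  by_contra hc
  push_neg at hc
  obtain ⟨⟨i, hi⟩, ⟨j, hj⟩⟩ : (∃ i, q i < p i) ∧ (∃ j, p j < q j) := by
    obtain ⟨⟨i, hi⟩, ⟨j, hj⟩⟩ := hc
    exact ⟨⟨i, by omega⟩, ⟨j, by omega⟩⟩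
  have h1 : ((N : ℝ) * (z j : ℝ) - p j) - ((N : ℝ) * (z i : ℝ) - p i) < 1 := by
    have := hat_pos_pair (lt_of_le_of_ne (hat_nonneg _) (Ne.symm hp')) i j
    simpa [gridPU] using this
  have h2 : ((N : ℝ) * (z i : ℝ) - q i) - ((N : ℝ) * (z j : ℝ) - q j) < 1 := by
    have := hat_pos_pair (lt_of_le_of_ne (hat_nonneg _) (Ne.symm hq')) j i
    simpa [gridPU] using this
  have hi' : (q i : ℝ) + 1 ≤ p i := by exact_mod_cast Int.add_one_le_iff.2 hi
  have hj' : (p j : ℝ) + 1 ≤ q j := by exact_mod_cast Int.add_one_le_iff.2 hj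
  linarith

lemma posSet_card {N : ℕ} (z : Fin k → I) : (posSet N z).card ≤ k + 1 := by
  obtain ⟨pm, hpm, hmin⟩ :=
    Finset.exists_min_image (posSet N z) (fun p => ∑ i, p i) (posSet_nonempty N z)
  have hle : ∀ p ∈ posSet N z, ∀ i, pm i ≤ p i := by
    intro p hp
    rcases posSet_chain hpm hp with h | h
    · exact h
    · intro i
      have hsum : ∑ i, p i ≤ ∑ i, pm i := Finset.sum_le_sum fun i _ => h i
      have hsum' : ∑ i, pm i ≤ ∑ i, p i := hmin p hp
      by_contra hcc
      push_neg at hcc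
      have : ∑ i, p i < ∑ i, pm i :=
        Finset.sum_lt_sum (fun i _ => h i) ⟨i, mem_univ i, by omega⟩
      omega
  have hdiff : ∀ p ∈ posSet N z, ∀ i, p i - pm i ≤ 1 := by
    intro p hp i
    have h1 := gridPU_close (Finset.mem_filter.1 hp).2 i
    have h2 := gridPU_close (Finset.mem_filter.1 hpm).2 i
    have h3 : (p i : ℝ) - pm i < 2 := by
      rcases abs_lt.1 h1 with ⟨a1, a2⟩
      rcases abs_lt.1 h2 with ⟨b1, b2⟩
      linarith
    have h4 : (p i : ℝ) < (pm i : ℝ) + 2 := by linarith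
    have h5 : p i < pm i + 2 := by exact_mod_cast h4
    omega
  have hinj : Set.InjOn (fun p : Fin k → ℤ => (∑ i, (p i - pm i)).toNat) (posSet N z) := by
    intro p hp q hq hpq
    simp only at hpq
    have hnp : 0 ≤ ∑ i, (p i - pm i) := Finset.sum_nonneg fun i _ => by
      have := hle p hp i; omega
    have hnq : 0 ≤ ∑ i, (q i - pm i) := Finset.sum_nonneg fun i _ => by
      have := hle q hq i; omega
    have hsums : ∑ i, (p i - pm i) = ∑ i, (q i - pm i) := by omega
    rcases posSet_chain hp hq with h | h
    · by_contra hne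
      obtain ⟨i, hi⟩ : ∃ i, p i ≠ q i := by
        by_contra hcc; push_neg at hcc; exact hne (funext hcc)
      have : ∑ i, (p i - pm i) < ∑ i, (q i - pm i) :=
        Finset.sum_lt_sum (fun i _ => by have := h i; omega)
          ⟨i, mem_univ i, by have := h i; omega⟩
      omega
    · by_contra hne
      obtain ⟨i, hi⟩ : ∃ i, p i ≠ q i := by
        by_contra hcc; push_neg at hcc; exact hne (funext hcc)
      have : ∑ i, (q i - pm i) < ∑ i, (p i - pm i) :=
        Finset.sum_lt_sum (fun i _ => by have := h i; omega)
          ⟨i, mem_univ i, by have := h i; omega⟩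
      omega
  have hmaps : ∀ p ∈ posSet N z, (∑ i, (p i - pm i)).toNat ∈ Finset.range (k + 1) := by
    intro p hp
    rw [Finset.mem_range]
    have h1 : ∑ i, (p i - pm i) ≤ ∑ _i : Fin k, (1 : ℤ) :=
      Finset.sum_le_sum fun i _ => hdiff p hp i
    have h2 : 0 ≤ ∑ i, (p i - pm i) := Finset.sum_nonneg fun i _ => by
      have := hle p hp i; omega
    simp only [Finset.sum_const, Finset.card_univ, Fintype.card_fin, nsmul_eq_mul,
      mul_one] at h1
    omega
  calc (posSet N z).card ≤ (Finset.range (k+1)).card :=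
        Finset.card_le_card_of_injOn _ hmaps hinj
  _ = k + 1 := Finset.card_range _


/-! ### the approximation map -/

variable {V : Type} [Fintype V]

/-- The partition-of-unity approximation with vertex labels `wmap`. -/
def apx (N : ℕ) (wmap : (Fin k → ℤ) → V) (z : Fin k → I) : V → ℝ := fun v =>
  (∑ p ∈ box k N, if wmap p = v then gridPU N p z else 0) / den N z

lemma apx_nonneg (N : ℕ) (wmap : (Fin k → ℤ) → V) (z : Fin k → I) (v : V) :
    0 ≤ apx N wmap z v := by
  refine div_nonneg (Finset.sum_nonneg fun p _ => ?_) (le_of_lt (den_pos N z))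
  split <;> simp [gridPU_nonneg]

lemma apx_sum (N : ℕ) (wmap : (Fin k → ℤ) → V) (z : Fin k → I) :
    ∑ v, apx N wmap z v = 1 := by
  classical
  unfold apx
  rw [← Finset.sum_div]
  rw [Finset.sum_comm]
  have : ∀ p ∈ box k N, ∑ v : V, (if wmap p = v then gridPU N p z else 0) = gridPU N p z := by
    intro p _
    rw [Finset.sum_ite_eq (Finset.univ) (wmap p) (fun _ => gridPU N p z)]
    simp
  rw [Finset.sum_congr rfl this]
  exact div_self (ne_of_gt (den_pos N z))

lemma apx_supp {N : ℕ} {wmap : (Fin k → ℤ) → V} {z : Fin k → I} {v : V}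
    (h : apx N wmap z v ≠ 0) : ∃ p ∈ posSet N z, wmap p = v := by
  have hnum : (∑ p ∈ box k N, if wmap p = v then gridPU N p z else 0) ≠ 0 := by
    intro hc
    exact h (by unfold apx; rw [hc, zero_div])
  obtain ⟨p, hp, hne⟩ := Finset.exists_ne_zero_of_sum_ne_zero hnum
  refine ⟨p, Finset.mem_filter.2 ⟨hp, ?_⟩, ?_⟩
  · intro hc; rw [hc] at hne; simp at hne
  · by_contra hc; rw [if_neg hc] at hne; exact hne rfl

lemma apx_continuous (N : ℕ) (wmap : (Fin k → ℤ) → V) :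
    Continuous fun z : Fin k → I => apx N wmap z := by
  refine continuous_pi fun v => ?_
  refine Continuous.div (continuous_finset_sum _ fun p _ => ?_) (continuous_den N)
    (fun z => ne_of_gt (den_pos N z))
  split
  · exact continuous_gridPU N p
  · exact continuous_const

lemma apx_const {N : ℕ} {wmap : (Fin k → ℤ) → V} {z : Fin k → I} {u₀ : V}
    (h : ∀ p ∈ posSet N z, wmap p = u₀) :
    apx N wmap z = Pi.single u₀ 1 := by
  classical
  funext v
  rcases eq_or_ne v u₀ with rfl | hv
  · have : ∀ p ∈ box k N, (if wmap p = v then gridPU N p z else 0) = gridPU N p z := by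
      intro p hp
      rcases eq_or_ne (gridPU N p z) 0 with h0 | h0
      · split <;> simp [h0]
      · rw [if_pos (h p (Finset.mem_filter.2 ⟨hp, h0⟩))]
    unfold apx
    rw [Finset.sum_congr rfl this]
    show den N z / den N z = _
    rw [div_self (ne_of_gt (den_pos N z))]
    simp
  · have : ∀ p ∈ box k N, (if wmap p = v then gridPU N p z else 0) = 0 := by
      intro p hp
      rcases eq_or_ne (gridPU N p z) 0 with h0 | h0
      · split <;> simp [h0]
      · rw [if_neg]
        rw [h p (Finset.mem_filter.2 ⟨hp, h0⟩)]
        exact fun hc => hv hc.symm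
    unfold apx
    rw [Finset.sum_congr rfl this]
    simp [Pi.single_eq_of_ne hv]

lemma apx_card_supp (N : ℕ) (wmap : (Fin k → ℤ) → V) (z : Fin k → I) :
    (Finset.univ.filter fun v => apx N wmap z v ≠ 0).card ≤ k + 1 := by
  classical
  have hsub : (Finset.univ.filter fun v => apx N wmap z v ≠ 0) ⊆ (posSet N z).image wmap := by
    intro v hv
    obtain ⟨p, hp, hpv⟩ := apx_supp (Finset.mem_filter.1 hv).2
    exact Finset.mem_image.2 ⟨p, hp, hpv⟩
  calc (Finset.univ.filter fun v => apx N wmap z v ≠ 0).card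
      ≤ ((posSet N z).image wmap).card := Finset.card_le_card hsub
  _ ≤ (posSet N z).card := Finset.card_image_le
  _ ≤ k + 1 := posSet_card z

/-- active grid points are `1/N`-close to `z` -/
lemma posSet_close {N : ℕ} (hN : 0 < N) {z : Fin k → I} {p : Fin k → ℤ}
    (hp : p ∈ posSet N z) (i : Fin k) : |(z i : ℝ) - (p i : ℝ) / N| < 1 / N := by
  have h := gridPU_close (Finset.mem_filter.1 hp).2 i
  have hN' : (0 : ℝ) < N := by exact_mod_cast hN
  rw [abs_lt] at h ⊢
  have heq : (z i : ℝ) - (p i : ℝ)/N = (N * (z i : ℝ) - p i)/N := by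
    field_simp
  constructor
  · rw [heq, ← neg_div, div_lt_div_iff_of_pos_right hN']
    nlinarith [h.1, h.2]
  · rw [heq, div_lt_div_iff_of_pos_right hN']
    nlinarith [h.1, h.2]

/-- active grid points, scaled down, stay in `[0,1]` -/
lemma posSet_scale_mem {N : ℕ} (hN : 0 < N) {z : Fin k → I} {p : Fin k → ℤ}
    (hp : p ∈ posSet N z) (i : Fin k) :
    0 ≤ (p i : ℝ) / N ∧ (p i : ℝ) / N ≤ 1 := by
  have hbox := (Finset.mem_filter.1 hp).1
  rw [box, Finset.mem_Icc] at hbox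
  have h0 : (0 : ℤ) ≤ p i := hbox.1 i
  have h1 : p i ≤ N := hbox.2 i
  have hN' : (0 : ℝ) < N := by exact_mod_cast hN
  constructor
  · apply div_nonneg _ (le_of_lt hN')
    exact_mod_cast h0
  · rw [div_le_one hN']
    exact_mod_cast h1

end St16

namespace St16

open scoped unitInterval Topology
open Finset

section Space

variable {V : Type} [Fintype V] {G : SimpleGraph V}

def Fsupp (x : V → ℝ) : Finset V := Finset.univ.filter (fun v => x v ≠ 0)

lemma mem_Fsupp {x : V → ℝ} {v : V} : v ∈ Fsupp x ↔ x v ≠ 0 := by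
  simp [Fsupp]

lemma Fsupp_face (x : G.indepComplex.space) : Fsupp x.1 ∈ G.indepComplex.faces := by
  obtain ⟨⟨s, hs, hsub⟩, hnn, hsum⟩ := x.2
  refine G.indepComplex.down_closed s hs _ (fun v hv => hsub v (mem_Fsupp.1 hv)) ?_
  by_contra hc
  rw [Finset.not_nonempty_iff_eq_empty] at hc
  have : ∀ v, x.1 v = 0 := by
    intro v
    by_contra hv
    have : v ∈ Fsupp x.1 := mem_Fsupp.2 hv
    simp [hc] at this
  rw [Finset.sum_congr rfl (fun v _ => this v)] at hsum
  simp at hsum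

lemma face_indep {s : Finset V} (hs : s ∈ G.indepComplex.faces) :
    ∀ v ∈ s, ∀ w ∈ s, ¬ G.Adj v w := hs.2

lemma Fsupp_single {u : V} : Fsupp (Pi.single u (1:ℝ)) = {u} := by
  ext v
  rcases eq_or_ne v u with rfl | hv
  · simp [mem_Fsupp]
  · simp [mem_Fsupp, Pi.single_eq_of_ne hv, hv]

variable [Nonempty V]

def pickV (lo : LinearOrder V) (x : V → ℝ) : V :=
  if h : (Finset.univ.filter fun v => 1/(Fintype.card V : ℝ) ≤ x v).Nonempty then
    @Finset.min' V lo (Finset.univ.filter fun v => 1/(Fintype.card V : ℝ) ≤ x v) h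
  else Classical.arbitrary V

lemma pickV_big (lo : LinearOrder V) {x : V → ℝ} (hnn : ∀ v, 0 ≤ x v) (hsum : ∑ v, x v = 1) :
    1/(Fintype.card V : ℝ) ≤ x (pickV lo x) := by
  have hcard : 0 < (Fintype.card V : ℝ) := by
    have := Fintype.card_pos (α := V)
    exact_mod_cast this
  have hne : (Finset.univ.filter fun v => 1/(Fintype.card V : ℝ) ≤ x v).Nonempty := by
    by_contra hc
    rw [Finset.not_nonempty_iff_eq_empty] at hc
    have hall : ∀ v, x v < 1/(Fintype.card V : ℝ) := by
      intro v
      by_contra hv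
      push_neg at hv
      have hmem : v ∈ Finset.univ.filter fun v => 1/(Fintype.card V : ℝ) ≤ x v :=
        Finset.mem_filter.2 ⟨Finset.mem_univ v, hv⟩
      rw [hc] at hmem
      exact Finset.notMem_empty v hmem
    have : ∑ v, x v < ∑ _v : V, 1/(Fintype.card V : ℝ) :=
      Finset.sum_lt_sum_of_nonempty Finset.univ_nonempty fun v _ => hall v
    rw [hsum, Finset.sum_const, Finset.card_univ, nsmul_eq_mul] at this
    rw [mul_one_div, div_self (ne_of_gt hcard)] at this
    exact lt_irrefl 1 this
  rw [pickV, dif_pos hne]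
  exact (Finset.mem_filter.1 (@Finset.min'_mem V lo (Finset.univ.filter fun v =>
    1/(Fintype.card V : ℝ) ≤ x v) hne)).2

lemma pickV_single (lo : LinearOrder V) (u : V) : pickV lo (Pi.single u (1:ℝ)) = u := by
  have hcard : 0 < (Fintype.card V : ℝ) := by
    have := Fintype.card_pos (α := V)
    exact_mod_cast this
  have hcard1 : 1/(Fintype.card V : ℝ) ≤ 1 := by
    rw [div_le_one hcard]
    exact_mod_cast Fintype.card_pos (α := V)
  have : (Finset.univ.filter fun v => 1/(Fintype.card V : ℝ) ≤ (Pi.single u (1:ℝ) : V → ℝ) v) = {u} := by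
    ext v
    simp only [Finset.mem_filter, Finset.mem_univ, true_and, Finset.mem_singleton]
    rcases eq_or_ne v u with rfl | hv
    · simpa [Pi.single_eq_same] using hcard1
    · rw [Pi.single_eq_of_ne hv]
      simp only [hv, iff_false]
      intro h
      have : (0:ℝ) < 1/(Fintype.card V : ℝ) := by positivity
      linarith
  rw [pickV, this]
  rw [dif_pos ⟨u, Finset.mem_singleton_self u⟩]
  exact @Finset.min'_singleton V lo u

end Space

section Stages

variable {V : Type} [Fintype V] {G : SimpleGraph V} {k : ℕ}

/-- generic builder for our relative homotopies -/
def buildHR (F G' : C((Fin k → I), G.indepComplex.space)) (H : I × (Fin k → I) → V → ℝ)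
    (hc : Continuous H)
    (hface : ∀ q, ∃ s ∈ G.indepComplex.faces, ∀ v, H q v ≠ 0 → v ∈ s)
    (hnn : ∀ q v, 0 ≤ H q v) (hsum : ∀ q, ∑ v, H q v = 1)
    (h₀ : ∀ z, H (0, z) = (F z).1) (h₁ : ∀ z, H (1, z) = (G' z).1)
    (hb : ∀ t z, z ∈ Cube.boundary (Fin k) → H (t, z) = H (0, z)) :
    F.HomotopyRel G' (Cube.boundary (Fin k)) := by
  refine ⟨⟨⟨fun q => ⟨H q, ⟨hface q, hnn q, hsum q⟩⟩, hc.subtype_mk _⟩,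
    fun z => Subtype.ext (h₀ z), fun z => Subtype.ext (h₁ z)⟩,
    fun t z hz => Subtype.ext ?_⟩
  show H (t, z) = (F z).1
  rw [hb t z hz, h₀ z]

/-- the collar reparametrization, jointly in time -/
def EMapJ (c : ℝ) : I × (Fin k → I) → (Fin k → I) := fun q i =>
  toI (((q.2 i : ℝ) - (q.1 : ℝ) * c)/(1 - 2 * (q.1 : ℝ) * c))

lemma EMapJ_denom_pos {c : ℝ} (h0 : 0 ≤ c) (h1 : c < 1/2) (t : I) :
    0 < 1 - 2 * (t : ℝ) * c := by
  nlinarith [t.2.1, t.2.2]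

lemma continuous_EMapJ {c : ℝ} (h0 : 0 ≤ c) (h1 : c < 1/2) :
    Continuous (EMapJ (k := k) c) := by
  refine continuous_pi fun i => continuous_toI.comp (Continuous.div ?_ ?_ ?_)
  · exact (continuous_subtype_val.comp ((continuous_apply i).comp continuous_snd)).sub
      ((continuous_subtype_val.comp continuous_fst).mul continuous_const)
  · exact continuous_const.sub
      ((continuous_const.mul (continuous_subtype_val.comp continuous_fst)).mul continuous_const)
  · intro q
    exact ne_of_gt (EMapJ_denom_pos h0 h1 q.1)

lemma EMapJ_zero {c : ℝ} (z : Fin k → I) : EMapJ c (0, z) = z := by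
  funext i
  apply Subtype.ext
  show cl (((z i : ℝ) - 0 * c)/(1 - 2 * 0 * c)) = (z i : ℝ)
  rw [show ((z i : ℝ) - 0 * c)/(1 - 2 * 0 * c) = (z i : ℝ) by ring_nf]
  exact cl_of_mem (z i).2.1 (z i).2.2

lemma EMapJ_boundary {c : ℝ} (h0 : 0 ≤ c) (h1 : c < 1/2) {z : Fin k → I} (t : I)
    (hz : z ∈ Cube.boundary (Fin k)) : EMapJ c (t, z) ∈ Cube.boundary (Fin k) := by
  obtain ⟨i, hi⟩ := hz
  have hd := EMapJ_denom_pos h0 h1 t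
  have ht0 := t.2.1
  refine ⟨i, ?_⟩
  rcases hi with hi | hi
  · left
    apply Subtype.ext
    show cl (((z i : ℝ) - (t:ℝ) * c)/(1 - 2 * (t:ℝ) * c)) = 0
    apply cl_of_nonpos
    apply div_nonpos_of_nonpos_of_nonneg _ (le_of_lt hd)
    rw [hi]
    show (0:ℝ) - (t:ℝ) * c ≤ 0
    nlinarith
  · right
    apply Subtype.ext
    show cl (((z i : ℝ) - (t:ℝ) * c)/(1 - 2 * (t:ℝ) * c)) = 1
    apply cl_of_one_le
    rw [le_div_iff₀ hd, hi]
    show 1 * (1 - 2 * (t:ℝ) * c) ≤ 1 - (t:ℝ)*c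
    nlinarith

lemma EMapJ_collar {c : ℝ} (h0 : 0 ≤ c) (h1 : c < 1/2) {z : Fin k → I}
    (hm : md z ≤ c) : EMapJ c (1, z) ∈ Cube.boundary (Fin k) := by
  obtain ⟨i, hi⟩ := md_small hm h1
  have hd := EMapJ_denom_pos h0 h1 1
  simp only [Set.Icc.coe_one] at hd
  refine ⟨i, ?_⟩
  rcases hi with hi | hi
  · left
    apply Subtype.ext
    show cl (((z i : ℝ) - (1:ℝ) * c)/(1 - 2 * (1:ℝ) * c)) = 0
    apply cl_of_nonpos
    apply div_nonpos_of_nonpos_of_nonneg _ (by linarith)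
    linarith
  · right
    apply Subtype.ext
    show cl (((z i : ℝ) - (1:ℝ) * c)/(1 - 2 * (1:ℝ) * c)) = 1
    apply cl_of_one_le
    rw [le_div_iff₀ (by linarith)]
    linarith

/-- scaled grid point -/
def PtN (N : ℕ) (p : Fin k → ℤ) : Fin k → I := fun i => toI ((p i : ℝ) / N)

lemma PtN_close {N : ℕ} (hN : 0 < N) {z : Fin k → I} {p : Fin k → ℤ}
    (hp : p ∈ posSet N z) (i : Fin k) : |(z i : ℝ) - (PtN N p i : ℝ)| ≤ 1 / N := by
  have h1 := posSet_close hN hp i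
  have h2 := posSet_scale_mem hN hp i
  have : (PtN N p i : ℝ) = (p i : ℝ) / N := cl_of_mem h2.1 h2.2
  rw [this]
  exact le_of_lt h1

end Stages

end St16

open St16 in
set_option maxHeartbeats 2000000 in
theorem main_null {V : Type} [Fintype V] (G : SimpleGraph V) (r : ℕ) (σ : Finset V)
    (hσ : σ ∈ G.indepComplex.faces)
    (hext : ∀ τ ∈ G.indepComplex.faces, τ.card ≤ r →
      ∃ v ∈ σ, insert v τ ∈ G.indepComplex.faces)
    {k : ℕ} (hk : k + 1 ≤ r) (x₀ : G.indepComplex.space)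
    (γ : GenLoop (Fin k) G.indepComplex.space x₀) :
    GenLoop.Homotopic γ GenLoop.const := by
  have hV : Nonempty V := by
    obtain ⟨s, hs, _⟩ := x₀.2.1
    obtain ⟨v, _⟩ := G.indepComplex.nonempty_of_mem s hs
    exact ⟨v⟩
  have lo : LinearOrder V := LinearOrder.lift' (Fintype.equivFin V) (Fintype.equivFin V).injective
  have hcVpos : 0 < (Fintype.card V : ℝ) := by exact_mod_cast Fintype.card_pos (α := V)
  have hεpos : 0 < 1/(2*(Fintype.card V : ℝ)) := by positivity
  have hhalf : 1/(2*(Fintype.card V : ℝ)) + 1/(2*(Fintype.card V : ℝ))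
      = 1/(Fintype.card V : ℝ) := by field_simp; ring
  -- the extension choice function
  set ω : Finset V → V := fun s =>
    if h : s ∈ G.indepComplex.faces ∧ s.card ≤ r then (hext s h.1 h.2).choose
    else Classical.arbitrary V with hωdef
  have hω : ∀ s, s ∈ G.indepComplex.faces → s.card ≤ r →
      ω s ∈ σ ∧ insert (ω s) s ∈ G.indepComplex.faces := by
    intro s h1 h2
    rw [hωdef]
    dsimp only
    rw [dif_pos (⟨h1, h2⟩ : _ ∧ _)]
    obtain ⟨hm, hins⟩ := (hext s h1 h2).choose_spec
    exact ⟨hm, hins⟩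
  -- Stage 1 : collar reparametrization
  have hcont_E : Continuous (EMapJ (k := k) (1/8)) :=
    continuous_EMapJ (by norm_num) (by norm_num)
  have hcont_fX : Continuous fun z : Fin k → unitInterval => γ.1 (EMapJ (1/8) (1, z)) :=
    γ.1.continuous.comp (hcont_E.comp (Continuous.prodMk_right 1))
  set fX : C((Fin k → unitInterval), G.indepComplex.space) := ⟨_, hcont_fX⟩ with hfX
  set fvec : (Fin k → unitInterval) → V → ℝ := fun z => (fX z).1 with hfvec
  have hfvec_cont : Continuous fvec := continuous_subtype_val.comp fX.continuous
  have hH1 : γ.1.HomotopicRel fX (Cube.boundary (Fin k)) := by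
    refine ⟨⟨⟨⟨fun q => γ.1 (EMapJ (1/8) q), γ.1.continuous.comp hcont_E⟩, ?_, ?_⟩, ?_⟩⟩
    · intro z
      show γ.1 (EMapJ (1/8) (0, z)) = γ.1 z
      rw [EMapJ_zero]
    · intro z; rfl
    · intro t z hz
      show γ.1 (EMapJ (1/8) (t, z)) = γ.1 z
      rw [γ.2 _ (EMapJ_boundary (by norm_num) (by norm_num) t hz), γ.2 _ hz]
  have Z0 : ∀ z, md z ≤ 1/8 → fvec z = x₀.1 := by
    intro z h
    rw [hfvec]
    dsimp only
    rw [hfX]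
    show (γ.1 (EMapJ (1/8) (1, z))).1 = x₀.1
    rw [γ.2 _ (EMapJ_collar (by norm_num) (by norm_num) h)]
  have hbvec : ∀ z : Fin k → unitInterval, z ∈ Cube.boundary (Fin k) → fvec z = x₀.1 := by
    intro z hz
    refine Z0 z ?_
    rw [md_boundary hz]
    norm_num
  -- first modulus
  have hfu : UniformContinuous fvec := CompactSpace.uniformContinuous_of_continuous hfvec_cont
  obtain ⟨δ₁, hδ₁, hδ₁'⟩ := Metric.uniformContinuous_iff.1 hfu _ hεpos
  obtain ⟨n₁, hn₁⟩ := exists_nat_one_div_lt (lt_min hδ₁ (show (0:ℝ) < 1/16 by norm_num))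
  set N₁ : ℕ := n₁ + 1 with hN₁def
  have hN₁pos : 0 < N₁ := Nat.succ_pos _
  have hN₁cast : ((N₁ : ℕ) : ℝ) = (n₁ : ℝ) + 1 := by push_cast [hN₁def]; ring
  have hN₁δ : 1/(N₁:ℝ) < δ₁ := by
    rw [hN₁cast]; exact lt_of_lt_of_le hn₁ (min_le_left _ _)
  have hN₁c : 1/(N₁:ℝ) ≤ 1/16 := by
    rw [hN₁cast]; exact le_of_lt (lt_of_lt_of_le hn₁ (min_le_right _ _))
  have hN₁nn : (0:ℝ) < (N₁:ℝ) := by exact_mod_cast hN₁pos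
  have MODf : ∀ z z' : Fin k → unitInterval, (∀ i, |(z i:ℝ) - (z' i:ℝ)| ≤ 1/(N₁:ℝ)) →
      ∀ v, |fvec z v - fvec z' v| < 1/(2*(Fintype.card V : ℝ)) := by
    intro z z' h v
    have hd : dist z z' ≤ 1/(N₁:ℝ) := by
      rw [dist_pi_le_iff (by positivity)]
      intro i
      rw [Subtype.dist_eq, Real.dist_eq]
      exact h i
    have h2 := hδ₁' (lt_of_le_of_lt hd hN₁δ)
    calc |fvec z v - fvec z' v| = dist (fvec z v) (fvec z' v) := (Real.dist_eq _ _).symm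
    _ ≤ dist (fvec z) (fvec z') := dist_le_pi_dist _ _ v
    _ < _ := h2
  -- first approximation
  set u₀ : V := pickV lo x₀.1 with hu₀def
  have hu₀big : 1/(Fintype.card V : ℝ) ≤ x₀.1 u₀ := pickV_big lo x₀.2.2.1 x₀.2.2.2
  have hu₀supp : x₀.1 u₀ ≠ 0 := by
    intro hc; rw [hc] at hu₀big
    have : (0:ℝ) < 1/(Fintype.card V : ℝ) := by positivity
    linarith
  set w₁ : (Fin k → ℤ) → V := fun p => pickV lo (fvec (PtN N₁ p)) with hw₁def
  set gvec : (Fin k → unitInterval) → V → ℝ := apx N₁ w₁ with hgvec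
  have S1 : ∀ z v, gvec z v ≠ 0 → fvec z v ≠ 0 := by
    intro z v h
    rw [hgvec] at h
    obtain ⟨p, hp, hpv⟩ := apx_supp h
    have hclose : ∀ i, |(z i:ℝ) - (PtN N₁ p i:ℝ)| ≤ 1/(N₁:ℝ) :=
      fun i => PtN_close hN₁pos hp i
    have h1 : 1/(Fintype.card V : ℝ) ≤ fvec (PtN N₁ p) v := by
      rw [← hpv, hw₁def]
      exact pickV_big lo ((fX _).2.2.1) ((fX _).2.2.2)
    have h2 := MODf z (PtN N₁ p) hclose v
    rcases abs_lt.1 h2 with ⟨h3, h4⟩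
    intro h0
    rw [h0] at h3 h4
    linarith
  have gmem : ∀ z, (∃ s ∈ G.indepComplex.faces, ∀ v, gvec z v ≠ 0 → v ∈ s) ∧
      (∀ v, 0 ≤ gvec z v) ∧ ∑ v, gvec z v = 1 := by
    intro z
    refine ⟨⟨Fsupp (fvec z), Fsupp_face (fX z), fun v hv => mem_Fsupp.2 (S1 z v hv)⟩, ?_, ?_⟩
    · rw [hgvec]; exact apx_nonneg N₁ w₁ z
    · rw [hgvec]; exact apx_sum N₁ w₁ z
  set gX : C((Fin k → unitInterval), G.indepComplex.space) :=
    ⟨fun z => ⟨gvec z, gmem z⟩, by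
      refine Continuous.subtype_mk ?_ _
      rw [hgvec]; exact apx_continuous N₁ w₁⟩ with hgX
  have Z1 : ∀ z, md z ≤ 1/16 → gvec z = Pi.single u₀ 1 := by
    intro z h
    rw [hgvec]
    apply apx_const
    intro p hp
    have h1 : md (PtN N₁ p) ≤ md z + 1/(N₁:ℝ) :=
      md_le_md_add (by positivity) (fun i => PtN_close hN₁pos hp i)
    have h2 : md (PtN N₁ p) ≤ 1/8 := by linarith
    rw [hw₁def]
    dsimp only
    rw [Z0 _ h2, hu₀def]
  -- second modulus
  have hgcont : Continuous gvec := by rw [hgvec]; exact apx_continuous N₁ w₁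
  have hgu : UniformContinuous gvec := CompactSpace.uniformContinuous_of_continuous hgcont
  obtain ⟨δ₂, hδ₂, hδ₂'⟩ := Metric.uniformContinuous_iff.1 hgu _ hεpos
  obtain ⟨n₂, hn₂⟩ := exists_nat_one_div_lt (lt_min (half_pos hδ₂) (show (0:ℝ) < 1/32 by norm_num))
  set N₂ : ℕ := n₂ + 1 with hN₂def
  have hN₂pos : 0 < N₂ := Nat.succ_pos _
  have hN₂cast : ((N₂ : ℕ) : ℝ) = (n₂ : ℝ) + 1 := by push_cast [hN₂def]; ring
  have hN₂δ : 2/(N₂:ℝ) < δ₂ := by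
    have := lt_of_lt_of_le hn₂ (min_le_left _ _)
    rw [hN₂cast]
    rw [div_lt_iff₀ (by positivity)] at this ⊢
    linarith
  have hN₂c : 1/(N₂:ℝ) ≤ 1/32 := by
    rw [hN₂cast]; exact le_of_lt (lt_of_lt_of_le hn₂ (min_le_right _ _))
  have hN₂nn : (0:ℝ) < (N₂:ℝ) := by exact_mod_cast hN₂pos
  have MODg : ∀ y y' : Fin k → unitInterval, (∀ i, |(y i:ℝ) - (y' i:ℝ)| ≤ 2/(N₂:ℝ)) →
      ∀ v, |gvec y v - gvec y' v| < 1/(2*(Fintype.card V : ℝ)) := by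
    intro y y' h v
    have hd : dist y y' ≤ 2/(N₂:ℝ) := by
      rw [dist_pi_le_iff (by positivity)]
      intro i
      rw [Subtype.dist_eq, Real.dist_eq]
      exact h i
    have h2 := hδ₂' (lt_of_le_of_lt hd hN₂δ)
    calc |gvec y v - gvec y' v| = dist (gvec y v) (gvec y' v) := (Real.dist_eq _ _).symm
    _ ≤ dist (gvec y) (gvec y') := dist_le_pi_dist _ _ v
    _ < _ := h2
  -- second approximation
  set w₂ : (Fin k → ℤ) → V := fun q => pickV lo (gvec (PtN N₂ q)) with hw₂def
  set wσ : (Fin k → ℤ) → V := fun q => ω (Fsupp (gvec (PtN N₂ q))) with hwσdef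
  set hvec : (Fin k → unitInterval) → V → ℝ := apx N₂ wσ with hhvec
  set g'vec : (Fin k → unitInterval) → V → ℝ := apx N₂ w₂ with hg'vec
  have Sg : ∀ y, Fsupp (gvec y) ∈ G.indepComplex.faces ∧ (Fsupp (gvec y)).card ≤ r := by
    intro y
    constructor
    · exact Fsupp_face (gX y)
    · refine le_trans ?_ hk
      rw [hgvec]
      exact apx_card_supp N₁ w₁ y
  have hωg : ∀ q : Fin k → ℤ, wσ q ∈ σ ∧
      insert (wσ q) (Fsupp (gvec (PtN N₂ q))) ∈ G.indepComplex.faces := by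
    intro q
    rw [hwσdef]
    exact hω _ (Sg (PtN N₂ q)).1 (Sg (PtN N₂ q)).2
  -- approximate support facts
  have hpickg : ∀ y : Fin k → unitInterval, 1/(Fintype.card V : ℝ) ≤ gvec y (pickV lo (gvec y)) := by
    intro y
    exact pickV_big lo ((gmem y).2.1) ((gmem y).2.2)
  have CROSS : ∀ (z : Fin k → unitInterval) q q', q ∈ posSet N₂ z → q' ∈ posSet N₂ z →
      gvec (PtN N₂ q) (w₂ q') ≠ 0 := by
    intro z q q' hq hq'
    have hclose : ∀ i, |(PtN N₂ q i : ℝ) - (PtN N₂ q' i:ℝ)| ≤ 2/(N₂:ℝ) := by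
      intro i
      have h1 := PtN_close hN₂pos hq i
      have h2 := PtN_close hN₂pos hq' i
      have := abs_sub_abs_le_abs_sub ((z i:ℝ) - PtN N₂ q i) ((z i:ℝ) - PtN N₂ q' i)
      have h3 : |(PtN N₂ q i : ℝ) - (PtN N₂ q' i:ℝ)|
          = |((z i:ℝ) - PtN N₂ q' i) - ((z i:ℝ) - PtN N₂ q i)| := by ring_nf
      rw [h3]
      calc |((z i:ℝ) - PtN N₂ q' i) - ((z i:ℝ) - PtN N₂ q i)|
          ≤ |(z i:ℝ) - PtN N₂ q' i| + |(z i:ℝ) - PtN N₂ q i| := abs_sub _ _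
      _ ≤ 1/(N₂:ℝ) + 1/(N₂:ℝ) := add_le_add h2 h1
      _ = 2/(N₂:ℝ) := by ring
    have h1 : 1/(Fintype.card V : ℝ) ≤ gvec (PtN N₂ q') (w₂ q') := by
      rw [hw₂def]; exact hpickg (PtN N₂ q')
    have h2 := MODg (PtN N₂ q) (PtN N₂ q') hclose (w₂ q')
    rcases abs_lt.1 h2 with ⟨h3, h4⟩
    intro h0
    rw [h0] at h3 h4
    linarith
  have S2' : ∀ (z : Fin k → unitInterval) q, q ∈ posSet N₂ z → gvec z (w₂ q) ≠ 0 := by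
    intro z q hq
    have hclose : ∀ i, |(z i:ℝ) - (PtN N₂ q i:ℝ)| ≤ 2/(N₂:ℝ) := by
      intro i
      refine le_trans (PtN_close hN₂pos hq i) ?_
      rw [div_le_div_iff_of_pos_right hN₂nn]
      norm_num
    have h1 : 1/(Fintype.card V : ℝ) ≤ gvec (PtN N₂ q) (w₂ q) := by
      rw [hw₂def]; exact hpickg (PtN N₂ q)
    have h2 := MODg z (PtN N₂ q) hclose (w₂ q)
    rcases abs_lt.1 h2 with ⟨h3, h4⟩
    intro h0
    rw [h0] at h3 h4
    linarith
  have S2 : ∀ z v, g'vec z v ≠ 0 → gvec z v ≠ 0 := by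
    intro z v h
    rw [hg'vec] at h
    obtain ⟨q, hq, rfl⟩ := apx_supp h
    exact S2' z q hq
  have Sσ : ∀ z v, hvec z v ≠ 0 → v ∈ σ := by
    intro z v h
    rw [hhvec] at h
    obtain ⟨q, hq, rfl⟩ := apx_supp h
    exact (hωg q).1
  have hU : ∀ z : Fin k → unitInterval,
      (((posSet N₂ z).image w₂) ∪ ((posSet N₂ z).image wσ)) ∈ G.indepComplex.faces := by
    intro z
    constructor
    · obtain ⟨q, hq⟩ := posSet_nonempty N₂ z
      exact ⟨w₂ q, Finset.mem_union_left _ (Finset.mem_image_of_mem _ hq)⟩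
    · intro a ha b hb
      have key : ∀ q q', q ∈ posSet N₂ z → q' ∈ posSet N₂ z → ¬ G.Adj (wσ q) (w₂ q') := by
        intro q q' hq hq' hadj
        have hface := (hωg q).2
        exact face_indep hface _ (Finset.mem_insert_self _ _) _
          (Finset.mem_insert_of_mem (mem_Fsupp.2 (CROSS z q q' hq hq'))) hadj
      rcases Finset.mem_union.1 ha with ha | ha <;> rcases Finset.mem_union.1 hb with hb | hb
      · obtain ⟨q, hq, rfl⟩ := Finset.mem_image.1 ha
        obtain ⟨q', hq', rfl⟩ := Finset.mem_image.1 hb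
        exact face_indep (Fsupp_face (gX z)) _ (mem_Fsupp.2 (S2' z q hq)) _
          (mem_Fsupp.2 (S2' z q' hq'))
      · obtain ⟨q, hq, rfl⟩ := Finset.mem_image.1 ha
        obtain ⟨q', hq', rfl⟩ := Finset.mem_image.1 hb
        intro hadj
        exact key q' q hq' hq hadj.symm
      · obtain ⟨q, hq, rfl⟩ := Finset.mem_image.1 ha
        obtain ⟨q', hq', rfl⟩ := Finset.mem_image.1 hb
        exact key q q' hq hq'
      · obtain ⟨q, hq, rfl⟩ := Finset.mem_image.1 ha
        obtain ⟨q', hq', rfl⟩ := Finset.mem_image.1 hb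
        exact face_indep hσ _ (hωg q).1 _ (hωg q').1
  have Z2 : ∀ z, md z ≤ 1/32 → g'vec z = Pi.single u₀ 1 := by
    intro z h
    rw [hg'vec]
    apply apx_const
    intro q hq
    have h1 : md (PtN N₂ q) ≤ md z + 1/(N₂:ℝ) :=
      md_le_md_add (by positivity) (fun i => PtN_close hN₂pos hq i)
    have h2 : md (PtN N₂ q) ≤ 1/16 := by linarith
    rw [hw₂def]
    dsimp only
    rw [Z1 _ h2]
    exact pickV_single lo u₀
  have Z3 : ∀ z, md z ≤ 1/32 → hvec z = Pi.single (ω {u₀}) 1 := by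
    intro z h
    rw [hhvec]
    apply apx_const
    intro q hq
    have h1 : md (PtN N₂ q) ≤ md z + 1/(N₂:ℝ) :=
      md_le_md_add (by positivity) (fun i => PtN_close hN₂pos hq i)
    have h2 : md (PtN N₂ q) ≤ 1/16 := by linarith
    rw [hwσdef]
    dsimp only
    rw [Z1 _ h2, Fsupp_single]
  -- profiles and the Φ map
  set Bf : ℝ → ℝ := fun u => cl (1 - 128*u) with hBfdef
  set Af : ℝ → ℝ := fun u => cl (64*u - 1) with hAfdef
  have hB0 : ∀ u, 0 ≤ Bf u := fun u => cl_nonneg _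
  have hB1 : ∀ u, Bf u ≤ 1 := fun u => cl_le_one _
  have hA0 : ∀ u, 0 ≤ Af u := fun u => cl_nonneg _
  have hA1 : ∀ u, Af u ≤ 1 := fun u => cl_le_one _
  have hBzero : ∀ u : ℝ, 1/128 ≤ u → Bf u = 0 := by
    intro u h; rw [hBfdef]; exact cl_of_nonpos (by linarith)
  have hBone : Bf 0 = 1 := by rw [hBfdef]; exact cl_of_one_le (by norm_num)
  have hAzero : ∀ u : ℝ, u ≤ 1/64 → Af u = 0 := by
    intro u h; rw [hAfdef]; exact cl_of_nonpos (by linarith)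
  have hAone : ∀ u : ℝ, 1/32 ≤ u → Af u = 1 := by
    intro u h; rw [hAfdef]; exact cl_of_one_le (by linarith)
  have hBsupp : ∀ u : ℝ, Bf u ≠ 0 → u < 1/128 := by
    intro u h
    by_contra hc; push_neg at hc; exact h (hBzero u hc)
  have hBcont : Continuous Bf := by
    rw [hBfdef]; exact continuous_cl.comp (continuous_const.sub (continuous_const.mul continuous_id))
  have hAcont : Continuous Af := by
    rw [hAfdef]; exact continuous_cl.comp ((continuous_const.mul continuous_id).sub continuous_const)
  -- singleton faces
  have hu₀x₀ : u₀ ∈ Fsupp x₀.1 := mem_Fsupp.2 hu₀supp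
  have hu₀face : ({u₀} : Finset V) ∈ G.indepComplex.faces := by
    refine G.indepComplex.down_closed _ (Fsupp_face x₀) {u₀} ?_ (Finset.singleton_nonempty u₀)
    intro a ha
    rw [Finset.mem_singleton] at ha
    subst ha
    exact hu₀x₀
  have hr1 : 1 ≤ r := by omega
  have hv₀' := hω {u₀} hu₀face (by rw [Finset.card_singleton]; exact hr1)
  set v₀ : V := ω ({u₀} : Finset V) with hv₀def
  have hv₀σ : v₀ ∈ σ := hv₀'.1
  have hv₀face : insert v₀ ({u₀} : Finset V) ∈ G.indepComplex.faces := hv₀'.2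
  -- Pi.single facts
  have hsg_nn : ∀ (a : V) v, 0 ≤ (Pi.single a (1:ℝ) : V → ℝ) v := by
    intro a v
    rcases eq_or_ne v a with rfl | hva
    · rw [Pi.single_eq_same]; norm_num
    · rw [Pi.single_eq_of_ne hva]
  have hsg_sum : ∀ a : V, ∑ v, (Pi.single a (1:ℝ) : V → ℝ) v = 1 := by
    intro a
    rw [Finset.sum_pi_single' a 1 Finset.univ]
    simp
  have hsg_supp : ∀ (a v : V), (Pi.single a (1:ℝ) : V → ℝ) v ≠ 0 → v = a := by
    intro a v h
    by_contra hva
    exact h (Pi.single_eq_of_ne hva 1)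
  set Φ : ℝ → V → ℝ := fun u v => Bf u * x₀.1 v
      + ((1 - Bf u) * (1 - Af u)) * (Pi.single u₀ (1:ℝ) : V → ℝ) v
      + ((1 - Bf u) * Af u) * (Pi.single v₀ (1:ℝ) : V → ℝ) v with hΦdef
  have PHImem : ∀ u : ℝ, (∃ s ∈ G.indepComplex.faces, ∀ v, Φ u v ≠ 0 → v ∈ s) ∧
      (∀ v, 0 ≤ Φ u v) ∧ ∑ v, Φ u v = 1 := by
    intro u
    refine ⟨?_, ?_, ?_⟩
    · rcases le_or_gt u (1/64) with hu | hu
      · refine ⟨Fsupp x₀.1, Fsupp_face x₀, ?_⟩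
        intro v hv
        rw [mem_Fsupp]
        by_contra h0
        apply hv
        have hvu : (Pi.single u₀ (1:ℝ) : V → ℝ) v = 0 := by
          rcases eq_or_ne v u₀ with rfl | hne
          · exact absurd h0 (mem_Fsupp.1 hu₀x₀)
          · exact Pi.single_eq_of_ne hne 1
        rw [hΦdef]
        dsimp only
        rw [h0, hvu, hAzero u hu]
        ring
      · refine ⟨insert v₀ ({u₀} : Finset V), hv₀face, ?_⟩
        intro v hv
        have hB : Bf u = 0 := hBzero u (by linarith)
        rcases eq_or_ne v u₀ with rfl | hne
        · exact Finset.mem_insert_of_mem (Finset.mem_singleton_self _)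
        rcases eq_or_ne v v₀ with rfl | hne'
        · exact Finset.mem_insert_self _ _
        exfalso
        apply hv
        rw [hΦdef]
        dsimp only
        rw [hB, Pi.single_eq_of_ne hne, Pi.single_eq_of_ne hne']
        ring
    · intro v
      rw [hΦdef]
      dsimp only
      refine add_nonneg (add_nonneg ?_ ?_) ?_
      · exact mul_nonneg (hB0 u) (x₀.2.2.1 v)
      · exact mul_nonneg (mul_nonneg (by linarith [hB1 u]) (by linarith [hA1 u])) (hsg_nn u₀ v)
      · exact mul_nonneg (mul_nonneg (by linarith [hB1 u]) (hA0 u)) (hsg_nn v₀ v)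
    · rw [hΦdef]
      dsimp only
      rw [Finset.sum_add_distrib, Finset.sum_add_distrib,
        ← Finset.mul_sum, ← Finset.mul_sum, ← Finset.mul_sum,
        x₀.2.2.2, hsg_sum, hsg_sum]
      ring
  have PHI0 : ∀ v, Φ 0 v = x₀.1 v := by
    intro v
    rw [hΦdef]
    dsimp only
    rw [hBone]
    ring
  have PHIbig : ∀ u : ℝ, 1/32 ≤ u → Φ u = (Pi.single v₀ (1:ℝ) : V → ℝ) := by
    intro u hu
    funext v
    rw [hΦdef]
    dsimp only
    rw [hBzero u (by linarith), hAone u hu]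
    ring
  have PHIcont : Continuous fun q : ℝ => Φ q := by
    rw [hΦdef]
    refine continuous_pi fun v => ?_
    refine Continuous.add (Continuous.add ?_ ?_) ?_
    · exact hBcont.mul continuous_const
    · exact (((continuous_const.sub hBcont).mul (continuous_const.sub hAcont)).mul
        continuous_const)
    · exact (((continuous_const.sub hBcont).mul hAcont).mul continuous_const)
  -- continuity atoms
  have cT : Continuous fun q : unitInterval × (Fin k → unitInterval) => ((q.1 : ℝ)) :=
    continuous_subtype_val.comp continuous_fst
  have cmd : Continuous fun q : unitInterval × (Fin k → unitInterval) => md q.2 :=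
    continuous_md.comp continuous_snd
  have cfv : ∀ v, Continuous fun q : unitInterval × (Fin k → unitInterval) => fvec q.2 v :=
    fun v => (continuous_apply v).comp (hfvec_cont.comp continuous_snd)
  have cgv : ∀ v, Continuous fun q : unitInterval × (Fin k → unitInterval) => gvec q.2 v :=
    fun v => (continuous_apply v).comp (hgcont.comp continuous_snd)
  have hg'cont : Continuous g'vec := by rw [hg'vec]; exact apx_continuous N₂ w₂
  have hhcont : Continuous hvec := by rw [hhvec]; exact apx_continuous N₂ wσ
  have cg'v : ∀ v, Continuous fun q : unitInterval × (Fin k → unitInterval) => g'vec q.2 v :=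
    fun v => (continuous_apply v).comp (hg'cont.comp continuous_snd)
  have chv : ∀ v, Continuous fun q : unitInterval × (Fin k → unitInterval) => hvec q.2 v :=
    fun v => (continuous_apply v).comp (hhcont.comp continuous_snd)
  have cBm : Continuous fun q : unitInterval × (Fin k → unitInterval) => Bf (md q.2) :=
    hBcont.comp cmd
  have cAm : Continuous fun q : unitInterval × (Fin k → unitInterval) => Af (md q.2) :=
    hAcont.comp cmd
  -- basic sums/nonneg
  have g'nn : ∀ z v, 0 ≤ g'vec z v := by
    intro z v; rw [hg'vec]; exact apx_nonneg N₂ w₂ z v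
  have g'sum : ∀ z, ∑ v, g'vec z v = 1 := by
    intro z; rw [hg'vec]; exact apx_sum N₂ w₂ z
  have hnn' : ∀ z v, 0 ≤ hvec z v := by
    intro z v; rw [hhvec]; exact apx_nonneg N₂ wσ z v
  have hsum' : ∀ z, ∑ v, hvec z v = 1 := by
    intro z; rw [hhvec]; exact apx_sum N₂ wσ z
  have g'supp : ∀ z v, g'vec z v ≠ 0 → v ∈ (posSet N₂ z).image w₂ := by
    intro z v h
    rw [hg'vec] at h
    obtain ⟨q, hq, rfl⟩ := apx_supp h
    exact Finset.mem_image_of_mem _ hq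
  have hsupp' : ∀ z v, hvec z v ≠ 0 → v ∈ (posSet N₂ z).image wσ := by
    intro z v h
    rw [hhvec] at h
    obtain ⟨q, hq, rfl⟩ := apx_supp h
    exact Finset.mem_image_of_mem _ hq
  ------------------------------------------------------------------
  -- Stage 2 : straight-line to the blended first approximation
  set H2 : unitInterval × (Fin k → unitInterval) → V → ℝ := fun q v =>
    (1 - (q.1:ℝ)) * fvec q.2 v + ((q.1:ℝ) * Bf (md q.2)) * x₀.1 v
      + ((q.1:ℝ) * (1 - Bf (md q.2))) * gvec q.2 v with hH2def
  have cont2 : Continuous H2 := by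
    rw [hH2def]
    refine continuous_pi fun v => ?_
    refine Continuous.add (Continuous.add ?_ ?_) ?_
    · exact (continuous_const.sub cT).mul (cfv v)
    · exact (cT.mul cBm).mul continuous_const
    · exact (cT.mul (continuous_const.sub cBm)).mul (cgv v)
  have face2 : ∀ q, ∃ s ∈ G.indepComplex.faces, ∀ v, H2 q v ≠ 0 → v ∈ s := by
    intro q
    refine ⟨Fsupp (fvec q.2), Fsupp_face (fX q.2), ?_⟩
    intro v hv
    rw [mem_Fsupp]
    by_contra h0
    apply hv
    have hg0 : gvec q.2 v = 0 := by
      by_contra hg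
      exact (S1 q.2 v hg) h0
    rw [hH2def]
    dsimp only
    rcases eq_or_ne (Bf (md q.2)) 0 with hB | hB
    · rw [h0, hg0, hB]; ring
    · have hx : x₀.1 v = 0 := by
        rw [← Z0 q.2 (le_of_lt (lt_of_lt_of_le (hBsupp _ hB) (by norm_num)))]
        exact h0
      rw [h0, hg0, hx]; ring
  have nn2 : ∀ q v, 0 ≤ H2 q v := by
    intro q v
    rw [hH2def]
    dsimp only
    refine add_nonneg (add_nonneg ?_ ?_) ?_
    · exact mul_nonneg (by linarith [q.1.2.2]) ((fX q.2).2.2.1 v)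
    · exact mul_nonneg (mul_nonneg q.1.2.1 (hB0 _)) (x₀.2.2.1 v)
    · exact mul_nonneg (mul_nonneg q.1.2.1 (by linarith [hB1 (md q.2)])) ((gmem q.2).2.1 v)
  have sum2 : ∀ q, ∑ v, H2 q v = 1 := by
    intro q
    rw [hH2def]
    dsimp only
    rw [Finset.sum_add_distrib, Finset.sum_add_distrib,
      ← Finset.mul_sum, ← Finset.mul_sum, ← Finset.mul_sum,
      (fX q.2).2.2.2, x₀.2.2.2, (gmem q.2).2.2]
    ring
  have bd2 : ∀ (t : unitInterval) z, z ∈ Cube.boundary (Fin k) → H2 (t, z) = H2 (0, z) := by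
    intro t z hz
    funext v
    rw [hH2def]
    dsimp only
    rw [md_boundary hz, hBone, hbvec z hz]
    push_cast
    ring
  set F2 : C((Fin k → unitInterval), G.indepComplex.space) :=
    ⟨fun z => ⟨H2 (1, z), face2 (1, z), nn2 (1, z), sum2 (1, z)⟩,
      Continuous.subtype_mk (cont2.comp (Continuous.prodMk_right 1)) _⟩ with hF2
  have hH2' : ContinuousMap.HomotopicRel fX F2 (Cube.boundary (Fin k)) := by
    refine ⟨buildHR fX F2 H2 cont2 face2 nn2 sum2 ?_ (fun z => rfl) bd2⟩
    intro z
    rw [hH2def]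
    dsimp only
    funext v
    push_cast
    ring
  ------------------------------------------------------------------
  -- Stage 3 : to the second approximation
  set H3 : unitInterval × (Fin k → unitInterval) → V → ℝ := fun q v =>
    Bf (md q.2) * x₀.1 v + ((1 - Bf (md q.2)) * (1 - (q.1:ℝ))) * gvec q.2 v
      + ((1 - Bf (md q.2)) * (q.1:ℝ)) * g'vec q.2 v with hH3def
  have cont3 : Continuous H3 := by
    rw [hH3def]
    refine continuous_pi fun v => ?_
    refine Continuous.add (Continuous.add ?_ ?_) ?_
    · exact cBm.mul continuous_const
    · exact ((continuous_const.sub cBm).mul (continuous_const.sub cT)).mul (cgv v)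
    · exact ((continuous_const.sub cBm).mul cT).mul (cg'v v)
  have face3 : ∀ q, ∃ s ∈ G.indepComplex.faces, ∀ v, H3 q v ≠ 0 → v ∈ s := by
    intro q
    refine ⟨Fsupp (fvec q.2), Fsupp_face (fX q.2), ?_⟩
    intro v hv
    rw [mem_Fsupp]
    by_contra h0
    apply hv
    have hg0 : gvec q.2 v = 0 := by
      by_contra hg; exact (S1 q.2 v hg) h0
    have hg'0 : g'vec q.2 v = 0 := by
      by_contra hg; exact (S1 q.2 v (S2 q.2 v hg)) h0
    rw [hH3def]
    dsimp only
    rcases eq_or_ne (Bf (md q.2)) 0 with hB | hB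
    · rw [hg0, hg'0, hB]; ring
    · have hx : x₀.1 v = 0 := by
        rw [← Z0 q.2 (le_of_lt (lt_of_lt_of_le (hBsupp _ hB) (by norm_num)))]
        exact h0
      rw [hg0, hg'0, hx]; ring
  have nn3 : ∀ q v, 0 ≤ H3 q v := by
    intro q v
    rw [hH3def]
    dsimp only
    refine add_nonneg (add_nonneg ?_ ?_) ?_
    · exact mul_nonneg (hB0 _) (x₀.2.2.1 v)
    · exact mul_nonneg (mul_nonneg (by linarith [hB1 (md q.2)]) (by linarith [q.1.2.2]))
        ((gmem q.2).2.1 v)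
    · exact mul_nonneg (mul_nonneg (by linarith [hB1 (md q.2)]) q.1.2.1) (g'nn q.2 v)
  have sum3 : ∀ q, ∑ v, H3 q v = 1 := by
    intro q
    rw [hH3def]
    dsimp only
    rw [Finset.sum_add_distrib, Finset.sum_add_distrib,
      ← Finset.mul_sum, ← Finset.mul_sum, ← Finset.mul_sum,
      x₀.2.2.2, (gmem q.2).2.2, g'sum q.2]
    ring
  have bd3 : ∀ (t : unitInterval) z, z ∈ Cube.boundary (Fin k) → H3 (t, z) = H3 (0, z) := by
    intro t z hz
    funext v
    rw [hH3def]
    dsimp only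
    rw [md_boundary hz, hBone]
    push_cast
    ring
  set F3 : C((Fin k → unitInterval), G.indepComplex.space) :=
    ⟨fun z => ⟨H3 (1, z), face3 (1, z), nn3 (1, z), sum3 (1, z)⟩,
      Continuous.subtype_mk (cont3.comp (Continuous.prodMk_right 1)) _⟩ with hF3
  have hH3' : ContinuousMap.HomotopicRel F2 F3 (Cube.boundary (Fin k)) := by
    refine ⟨buildHR F2 F3 H3 cont3 face3 nn3 sum3 ?_ (fun z => rfl) bd3⟩
    intro z
    show H3 (0, z) = H2 (1, z)
    rw [hH2def, hH3def]
    dsimp only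
    funext v
    push_cast
    ring
  ------------------------------------------------------------------
  -- Stage 4 : push into the star cluster of σ
  set H4 : unitInterval × (Fin k → unitInterval) → V → ℝ := fun q v =>
    Bf (md q.2) * x₀.1 v + ((1 - Bf (md q.2)) * (1 - (q.1:ℝ) * Af (md q.2))) * g'vec q.2 v
      + ((1 - Bf (md q.2)) * ((q.1:ℝ) * Af (md q.2))) * hvec q.2 v with hH4def
  have cont4 : Continuous H4 := by
    rw [hH4def]
    refine continuous_pi fun v => ?_
    refine Continuous.add (Continuous.add ?_ ?_) ?_
    · exact cBm.mul continuous_const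
    · exact ((continuous_const.sub cBm).mul (continuous_const.sub (cT.mul cAm))).mul (cg'v v)
    · exact ((continuous_const.sub cBm).mul (cT.mul cAm)).mul (chv v)
  have face4 : ∀ q, ∃ s ∈ G.indepComplex.faces, ∀ v, H4 q v ≠ 0 → v ∈ s := by
    intro q
    rcases le_or_gt (md q.2) (1/128) with hm | hm
    · refine ⟨Fsupp x₀.1, Fsupp_face x₀, ?_⟩
      intro v hv
      rw [mem_Fsupp]
      by_contra h0
      apply hv
      have hvne : v ≠ u₀ := by
        intro hc; subst hc; exact (mem_Fsupp.1 hu₀x₀) h0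
      have hg'0 : g'vec q.2 v = 0 := by
        rw [Z2 q.2 (by linarith)]
        exact Pi.single_eq_of_ne hvne 1
      rw [hH4def]
      dsimp only
      rw [h0, hg'0, hAzero (md q.2) (by linarith)]
      ring
    · refine ⟨((posSet N₂ q.2).image w₂ ∪ (posSet N₂ q.2).image wσ), hU q.2, ?_⟩
      intro v hv
      by_contra h0
      apply hv
      have hg'0 : g'vec q.2 v = 0 := by
        by_contra hg
        exact h0 (Finset.mem_union_left _ (g'supp q.2 v hg))
      have hh0 : hvec q.2 v = 0 := by
        by_contra hg
        exact h0 (Finset.mem_union_right _ (hsupp' q.2 v hg))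
      rw [hH4def]
      dsimp only
      rw [hg'0, hh0, hBzero (md q.2) (by linarith)]
      ring
  have nn4 : ∀ q v, 0 ≤ H4 q v := by
    intro q v
    rw [hH4def]
    dsimp only
    have h3 : (q.1:ℝ) * Af (md q.2) ≤ 1 := by
      nlinarith [q.1.2.1, q.1.2.2, hA0 (md q.2), hA1 (md q.2)]
    have h4 : 0 ≤ (q.1:ℝ) * Af (md q.2) := mul_nonneg q.1.2.1 (hA0 _)
    refine add_nonneg (add_nonneg ?_ ?_) ?_
    · exact mul_nonneg (hB0 _) (x₀.2.2.1 v)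
    · exact mul_nonneg (mul_nonneg (by linarith [hB1 (md q.2)]) (by linarith)) (g'nn q.2 v)
    · exact mul_nonneg (mul_nonneg (by linarith [hB1 (md q.2)]) h4) (hnn' q.2 v)
  have sum4 : ∀ q, ∑ v, H4 q v = 1 := by
    intro q
    rw [hH4def]
    dsimp only
    rw [Finset.sum_add_distrib, Finset.sum_add_distrib,
      ← Finset.mul_sum, ← Finset.mul_sum, ← Finset.mul_sum,
      x₀.2.2.2, g'sum q.2, hsum' q.2]
    ring
  have bd4 : ∀ (t : unitInterval) z, z ∈ Cube.boundary (Fin k) → H4 (t, z) = H4 (0, z) := by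
    intro t z hz
    funext v
    rw [hH4def]
    dsimp only
    rw [md_boundary hz, hBone]
    push_cast
    ring
  set F4 : C((Fin k → unitInterval), G.indepComplex.space) :=
    ⟨fun z => ⟨H4 (1, z), face4 (1, z), nn4 (1, z), sum4 (1, z)⟩,
      Continuous.subtype_mk (cont4.comp (Continuous.prodMk_right 1)) _⟩ with hF4
  have hH4' : ContinuousMap.HomotopicRel F3 F4 (Cube.boundary (Fin k)) := by
    refine ⟨buildHR F3 F4 H4 cont4 face4 nn4 sum4 ?_ (fun z => rfl) bd4⟩
    intro z
    show H4 (0, z) = H3 (1, z)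
    rw [hH3def, hH4def]
    dsimp only
    funext v
    push_cast
    ring
  ------------------------------------------------------------------
  -- Stage 5 : contract inside the simplex σ, away from the collar
  set H5 : unitInterval × (Fin k → unitInterval) → V → ℝ := fun q v =>
    if md q.2 ≤ 1/32 then Φ (md q.2) v
    else (1 - (q.1:ℝ)) * hvec q.2 v + (q.1:ℝ) * (Pi.single v₀ (1:ℝ) : V → ℝ) v with hH5def
  have key5 : ∀ (q : unitInterval × (Fin k → unitInterval)), md q.2 = 1/32 →
      ∀ v, Φ (md q.2) v
        = (1 - (q.1:ℝ)) * hvec q.2 v + (q.1:ℝ) * (Pi.single v₀ (1:ℝ) : V → ℝ) v := by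
    intro q hq v
    rw [hq, Z3 q.2 (le_of_eq hq), PHIbig (1/32) (le_refl _)]
    ring
  have cont5 : Continuous H5 := by
    rw [hH5def]
    refine continuous_pi fun v => ?_
    refine Continuous.if_le ?_ ?_ cmd continuous_const ?_
    · exact ((continuous_apply v).comp (PHIcont.comp cmd))
    · exact ((continuous_const.sub cT).mul (chv v)).add (cT.mul continuous_const)
    · intro q hq
      exact key5 q hq v
  have face5 : ∀ q, ∃ s ∈ G.indepComplex.faces, ∀ v, H5 q v ≠ 0 → v ∈ s := by
    intro q
    rcases le_or_gt (md q.2) (1/32) with hm | hm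
    · obtain ⟨s, hs, hsupp⟩ := (PHImem (md q.2)).1
      refine ⟨s, hs, ?_⟩
      intro v hv
      rw [hH5def] at hv
      dsimp only at hv
      rw [if_pos hm] at hv
      exact hsupp v hv
    · refine ⟨σ, hσ, ?_⟩
      intro v hv
      rw [hH5def] at hv
      dsimp only at hv
      rw [if_neg (not_le.2 hm)] at hv
      by_contra h0
      apply hv
      have hh0 : hvec q.2 v = 0 := by
        by_contra hg; exact h0 (Sσ q.2 v hg)
      have hv0 : (Pi.single v₀ (1:ℝ) : V → ℝ) v = 0 := by
        rcases eq_or_ne v v₀ with rfl | hne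
        · exact absurd hv₀σ h0
        · exact Pi.single_eq_of_ne hne 1
      rw [hh0, hv0]
      ring
  have nn5 : ∀ q v, 0 ≤ H5 q v := by
    intro q v
    rw [hH5def]
    dsimp only
    split
    · exact (PHImem (md q.2)).2.1 v
    · refine add_nonneg ?_ ?_
      · exact mul_nonneg (by linarith [q.1.2.2]) (hnn' q.2 v)
      · exact mul_nonneg q.1.2.1 (hsg_nn v₀ v)
  have sum5 : ∀ q, ∑ v, H5 q v = 1 := by
    intro q
    rw [hH5def]
    dsimp only
    split
    · exact (PHImem (md q.2)).2.2
    · rw [Finset.sum_add_distrib, ← Finset.mul_sum, ← Finset.mul_sum,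
        hsum' q.2, hsg_sum v₀]
      ring
  have bd5 : ∀ (t : unitInterval) z, z ∈ Cube.boundary (Fin k) → H5 (t, z) = H5 (0, z) := by
    intro t z hz
    funext v
    rw [hH5def]
    dsimp only
    have hc : md z ≤ 1/32 := by rw [md_boundary hz]; norm_num
    rw [if_pos hc, if_pos hc]
  have h05 : ∀ z, H5 (0, z) = H4 (1, z) := by
    intro z
    funext v
    rw [hH5def, hH4def]
    dsimp only
    rcases le_or_gt (md z) (1/32) with hm | hm
    · rw [if_pos hm, hΦdef]
      dsimp only
      rw [Z2 z hm, Z3 z hm]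
      push_cast
      ring
    · rw [if_neg (not_le.2 hm), hBzero (md z) (by linarith), hAone (md z) (le_of_lt hm)]
      push_cast
      ring
  set F5 : C((Fin k → unitInterval), G.indepComplex.space) :=
    ⟨fun z => ⟨H5 (1, z), face5 (1, z), nn5 (1, z), sum5 (1, z)⟩,
      Continuous.subtype_mk (cont5.comp (Continuous.prodMk_right 1)) _⟩ with hF5
  have hH5' : ContinuousMap.HomotopicRel F4 F5 (Cube.boundary (Fin k)) := by
    refine ⟨buildHR F4 F5 H5 cont5 face5 nn5 sum5 ?_ (fun z => rfl) bd5⟩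
    intro z
    show H5 (0, z) = H4 (1, z)
    exact h05 z
  ------------------------------------------------------------------
  -- Stage 6 : retract the radial profile
  set H6 : unitInterval × (Fin k → unitInterval) → V → ℝ := fun q v =>
    Φ ((1 - (q.1:ℝ)) * md q.2) v with hH6def
  have cont6 : Continuous H6 := by
    rw [hH6def]
    refine continuous_pi fun v => ?_
    exact (continuous_apply v).comp (PHIcont.comp ((continuous_const.sub cT).mul cmd))
  have face6 : ∀ q, ∃ s ∈ G.indepComplex.faces, ∀ v, H6 q v ≠ 0 → v ∈ s := by
    intro q
    obtain ⟨s, hs, hsupp⟩ := (PHImem ((1 - (q.1:ℝ)) * md q.2)).1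
    exact ⟨s, hs, fun v hv => hsupp v hv⟩
  have nn6 : ∀ q v, 0 ≤ H6 q v := fun q v => (PHImem _).2.1 v
  have sum6 : ∀ q, ∑ v, H6 q v = 1 := fun q => (PHImem _).2.2
  have bd6 : ∀ (t : unitInterval) z, z ∈ Cube.boundary (Fin k) → H6 (t, z) = H6 (0, z) := by
    intro t z hz
    funext v
    rw [hH6def]
    dsimp only
    rw [md_boundary hz, mul_zero, mul_zero]
  have h06 : ∀ z, H6 (0, z) = H5 (1, z) := by
    intro z
    funext v
    rw [hH6def, hH5def]
    dsimp only
    rcases le_or_gt (md z) (1/32) with hm | hm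
    · rw [if_pos hm]
      norm_num
    · rw [if_neg (not_le.2 hm)]
      norm_num
      rw [PHIbig (md z) (le_of_lt hm)]
  set Fend : C((Fin k → unitInterval), G.indepComplex.space) :=
    (GenLoop.const : GenLoop (Fin k) G.indepComplex.space x₀).1 with hFend
  have h16 : ∀ z, H6 (1, z) = (Fend z).1 := by
    intro z
    funext v
    rw [hH6def]
    dsimp only
    push_cast
    rw [sub_self, zero_mul, PHI0 v]
    rfl
  have hH6' : ContinuousMap.HomotopicRel F5 Fend (Cube.boundary (Fin k)) := by
    refine ⟨buildHR F5 Fend H6 cont6 face6 nn6 sum6 ?_ h16 bd6⟩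
    intro z
    show H6 (0, z) = H5 (1, z)
    exact h06 z
  exact ((((hH1.trans hH2').trans hH3').trans hH4').trans hH5').trans hH6'



/-- If `σ` is an independent set such that every independent set with at
most `r` vertices extends to some vertex of `σ`, then `I_G` is `(r-1)`-connected. -/
theorem statement16 {V : Type} [Fintype V] (G : SimpleGraph V) (r : ℕ)
    (σ : Finset V) (hσ : σ ∈ G.indepComplex.faces)
    (hext : ∀ τ ∈ G.indepComplex.faces, τ.card ≤ r →
      ∃ v ∈ σ, insert v τ ∈ G.indepComplex.faces) :
    NConnected ((r : ℤ) - 1) G.indepComplex.space := by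
  constructor
  · intro _
    obtain ⟨v, hv⟩ := G.indepComplex.nonempty_of_mem σ hσ
    refine ⟨⟨Pi.single v 1, ⟨⟨{v}, ?_, ?_⟩, ?_, ?_⟩⟩⟩
    · exact G.indepComplex.down_closed σ hσ {v}
        (Finset.singleton_subset_iff.2 hv) (Finset.singleton_nonempty v)
    · intro w hw
      rw [Finset.mem_singleton]
      by_contra hne
      exact hw (Pi.single_eq_of_ne hne 1)
    · intro w
      rcases eq_or_ne w v with rfl | hne
      · rw [Pi.single_eq_same]; norm_num
      · rw [Pi.single_eq_of_ne hne]
    · rw [Finset.sum_pi_single' v 1 Finset.univ]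
      simp
  · intro k hk x
    have hk' : k + 1 ≤ r := by
      have h1 : ((k:ℤ) + 1) ≤ (r:ℤ) := by linarith
      exact_mod_cast h1
    constructor
    intro a b
    refine Quotient.inductionOn₂ a b fun γ₁ γ₂ => Quotient.sound ?_
    exact (main_null G r σ hσ hext hk' x γ₁).trans
      (main_null G r σ hσ hext hk' x γ₂).symm
end
end

section
/- Let G be a finite connected graph of diameter n. Then the independence complex I_G is ⌊n/3 − 1⌋-connected. -/
attribute [local instance] Classical.propDecidable

/-! ### Auxiliary development for statement18 -/

section SpaceAux

variable {V : Type} [Fintype V] {G : SimpleGraph V}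

/-- Membership criterion for the geometric realization of the independence complex. -/
lemma indep_space_mem (F : V → ℝ) (h0 : ∀ x, 0 ≤ F x) (h1 : ∑ x, F x = 1)
    (hind : ∀ x y, F x ≠ 0 → F y ≠ 0 → ¬ G.Adj x y) :
    (∃ s ∈ G.indepComplex.faces, ∀ v, F v ≠ 0 → v ∈ s) ∧ (∀ v, 0 ≤ F v) ∧ ∑ v, F v = 1 := by
  refine ⟨⟨Finset.univ.filter (fun x => F x ≠ 0), ⟨?_, ?_⟩, fun v hv => by
    simp [Finset.mem_filter, hv]⟩, h0, h1⟩
  · by_contra hemp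
    rw [Finset.not_nonempty_iff_eq_empty, Finset.filter_eq_empty_iff] at hemp
    have : ∑ x, F x = 0 := Finset.sum_eq_zero (fun x _ => by
      by_contra hx; exact (hemp (Finset.mem_univ x)) hx)
    rw [h1] at this; norm_num at this
  · intro a ha b hb
    rw [Finset.mem_filter] at ha hb
    exact hind a b ha.2 hb.2

/-- Construct a point of the realization from a weight function. -/
noncomputable def mkX (F : V → ℝ) (h0 : ∀ x, 0 ≤ F x) (h1 : ∑ x, F x = 1)
    (hind : ∀ x y, F x ≠ 0 → F y ≠ 0 → ¬ G.Adj x y) : G.indepComplex.space :=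
  ⟨F, indep_space_mem F h0 h1 hind⟩

@[simp] lemma mkX_coe (F : V → ℝ) (h0) (h1) (hind) :
    (mkX (G := G) F h0 h1 hind).1 = F := rfl

/-- The coordinates of a point of the realization. -/
lemma continuous_X_coord (x : V) :
    Continuous (fun q : G.indepComplex.space => q.1 x) :=
  (continuous_apply x).comp continuous_subtype_val

lemma X_coord_nonneg (q : G.indepComplex.space) (x : V) : 0 ≤ q.1 x := q.2.2.1 x

lemma X_sum_one (q : G.indepComplex.space) : ∑ x, q.1 x = 1 := q.2.2.2

lemma X_indep (q : G.indepComplex.space) {x y : V} (hx : q.1 x ≠ 0) (hy : q.1 y ≠ 0) :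
    ¬ G.Adj x y := by
  obtain ⟨s, hs, hsupp⟩ := q.2.1
  exact hs.2 x (hsupp x hx) y (hsupp y hy)

/-- The point of the realization concentrated at a vertex. -/
noncomputable def vertexPt (v : V) : G.indepComplex.space :=
  mkX (fun x => if x = v then 1 else 0) (fun x => by positivity)
    (by simp) (fun x y hx hy => by
      have hxv : x = v := by by_contra h; simp [h] at hx
      have hyv : y = v := by by_contra h; simp [h] at hy
      rw [hxv, hyv]; exact G.loopless.irrefl v)

/-- Continuity of maps into the realization built coordinatewise. -/
lemma continuous_mkX {Y : Type*} [TopologicalSpace Y] (F : Y → V → ℝ)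
    (hF : ∀ x, Continuous (fun y => F y x))
    (h0 : ∀ y x, 0 ≤ F y x) (h1 : ∀ y, ∑ x, F y x = 1)
    (hind : ∀ y, ∀ x x', F y x ≠ 0 → F y x' ≠ 0 → ¬ G.Adj x x') :
    Continuous (fun y => (mkX (G := G) (F y) (h0 y) (h1 y) (hind y))) := by
  apply Continuous.subtype_mk
  exact continuous_pi hF

end SpaceAux

section GraphAux

variable {V : Type} {G : SimpleGraph V}

lemma adj_dist_le (hconn : G.Connected) {u a b : V} (hab : G.Adj a b) :
    G.dist u b ≤ G.dist u a + 1 := by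
  have h := hconn.dist_triangle (u := u) (v := a) (w := b)
  have : G.dist a b = 1 := SimpleGraph.dist_eq_one_iff_adj.mpr hab
  omega

lemma exists_geodesic_mid (hconn : G.Connected) {u₀ v₀ : V} {n : ℕ}
    (hd : G.dist u₀ v₀ = n) : ∀ j, j ≤ n → ∃ w, G.dist u₀ w = j ∧ G.dist w v₀ = n - j := by
  intro j
  induction j with
  | zero => intro _; exact ⟨u₀, SimpleGraph.dist_self, by simpa using hd⟩
  | succ j ih =>
    intro hj
    obtain ⟨w, hw1, hw2⟩ := ih (by omega)
    have hpos : 0 < G.dist w v₀ := by omega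
    obtain ⟨W, hW⟩ := hconn.exists_walk_length_eq_dist w v₀
    cases W with
    | nil => simp at hW; omega
    | @cons _ w' _ hadj W' =>
      rw [SimpleGraph.Walk.length_cons] at hW
      have hW' : G.dist w' v₀ ≤ n - j - 1 := by
        have := SimpleGraph.dist_le W'
        omega
      have huw' : G.dist u₀ w' ≤ j + 1 := by
        have := adj_dist_le hconn (u := u₀) hadj
        omega
      have htri : n ≤ G.dist u₀ w' + G.dist w' v₀ := by
        have := hconn.dist_triangle (u := u₀) (v := w') (w := v₀)
        omega
      exact ⟨w', by omega, by omega⟩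

end GraphAux

section ContAux

variable {ι Y : Type*} [TopologicalSpace Y]

lemma continuous_finset_inf' {s : Finset ι} (hs : s.Nonempty) {F : ι → Y → ℝ}
    (hF : ∀ i, Continuous (F i)) : Continuous fun y => s.inf' hs fun i => F i y := by
  induction hs using Finset.Nonempty.cons_induction with
  | singleton a => simpa using hF a
  | cons a s ha hs ih =>
    have : (fun y => (Finset.cons a s ha).inf' (Finset.cons_nonempty ha) fun i => F i y)
        = fun y => min (F a y) (s.inf' hs fun i => F i y) := by
      funext y; rw [Finset.inf'_cons]
    rw [this]; exact (hF a).min ih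

lemma continuous_finset_sup' {s : Finset ι} (hs : s.Nonempty) {F : ι → Y → ℝ}
    (hF : ∀ i, Continuous (F i)) : Continuous fun y => s.sup' hs fun i => F i y := by
  induction hs using Finset.Nonempty.cons_induction with
  | singleton a => simpa using hF a
  | cons a s ha hs ih =>
    have : (fun y => (Finset.cons a s ha).sup' (Finset.cons_nonempty ha) fun i => F i y)
        = fun y => max (F a y) (s.sup' hs fun i => F i y) := by
      funext y; rw [Finset.sup'_cons]
    rw [this]; exact (hF a).max ih

end ContAux

section SpreadAux

variable {V : Type} {G : SimpleGraph V}

/-- A family of m+2 vertices, pairwise nonadjacent, such that no vertex is adjacent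
to two of them. -/
structure Spread (G : SimpleGraph V) (m : ℕ) where
  w : Fin (m + 2) → V
  not_adj : ∀ i j, ¬ G.Adj (w i) (w j)
  blocker : ∀ x i j, G.Adj x (w i) → G.Adj x (w j) → i = j

lemma exists_spread (hconn : G.Connected) {u₀ v₀ : V} {n m : ℕ}
    (hd : G.dist u₀ v₀ = n) (h3 : 3 * (m + 1) ≤ n) : Nonempty (Spread G m) := by
  have key : ∀ i : Fin (m + 2), ∃ w, G.dist u₀ w = 3 * (i : ℕ) ∧ G.dist w v₀ = n - 3 * i := by
    intro i
    apply exists_geodesic_mid hconn hd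
    have : (i : ℕ) ≤ m + 1 := by omega
    omega
  choose w hw1 _ using key
  have hadj : ∀ a b, G.Adj a b → G.dist u₀ b ≤ G.dist u₀ a + 1 ∧
      G.dist u₀ a ≤ G.dist u₀ b + 1 :=
    fun a b hab => ⟨adj_dist_le hconn hab, adj_dist_le hconn hab.symm⟩
  refine ⟨⟨w, fun i j hij => ?_, fun x i j hxi hxj => ?_⟩⟩
  · have := hadj _ _ hij
    rw [hw1 i, hw1 j] at this
    have hij' : i = j := by
      have h1 : (i : ℕ) = j := by omega
      exact Fin.ext h1
    rw [hij'] at hij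
    exact G.loopless.irrefl _ hij
  · have h1 := hadj _ _ hxi.symm
    have h2 := hadj _ _ hxj.symm
    rw [hw1 i] at h1; rw [hw1 j] at h2
    have : (i : ℕ) = j := by omega
    exact Fin.ext this

variable [Fintype V]

/-- Total weight of the (open) neighbourhood of `S.w i`. -/
noncomputable def lam {m : ℕ} (S : Spread G m) (i : Fin (m + 2))
    (q : G.indepComplex.space) : ℝ :=
  ∑ x, if G.Adj x (S.w i) then q.1 x else 0

lemma lam_nonneg {m : ℕ} (S : Spread G m) (i : Fin (m + 2)) (q : G.indepComplex.space) :
    0 ≤ lam S i q :=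
  Finset.sum_nonneg fun x _ => by
    by_cases h : G.Adj x (S.w i) <;> simp [h, X_coord_nonneg q x]

lemma continuous_lam {m : ℕ} (S : Spread G m) (i : Fin (m + 2)) :
    Continuous (lam S i) := by
  apply continuous_finset_sum
  intro x _
  by_cases h : G.Adj x (S.w i) <;> simp [h, continuous_X_coord, continuous_const]

lemma sum_lam_le_one {m : ℕ} (S : Spread G m) (q : G.indepComplex.space) :
    ∑ i, lam S i q ≤ 1 := by
  rw [show (1:ℝ) = ∑ x, q.1 x from (X_sum_one q).symm]
  unfold lam
  rw [Finset.sum_comm]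
  apply Finset.sum_le_sum
  intro x _
  by_cases hx : ∃ i, G.Adj x (S.w i)
  · obtain ⟨i₀, hi₀⟩ := hx
    rw [Finset.sum_eq_single_of_mem i₀ (Finset.mem_univ i₀)]
    · simp [hi₀]
    · intro j _ hj
      rw [if_neg (fun hadj => hj (S.blocker x j i₀ hadj hi₀))]
  · push_neg at hx
    rw [Finset.sum_eq_zero fun i _ => by rw [if_neg (hx i)]]
    exact X_coord_nonneg q x

lemma exists_lam_lt {m : ℕ} (S : Spread G m) (q : G.indepComplex.space) {t : ℝ}
    (ht : 1 < (m + 2 : ℝ) * t) : ∃ i, lam S i q < t := by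
  by_contra h
  push_neg at h
  have : (m + 2 : ℝ) * t ≤ ∑ i, lam S i q := by
    calc (m + 2 : ℝ) * t = ∑ _i : Fin (m + 2), t := by
          rw [Finset.sum_const, Finset.card_univ, Fintype.card_fin]; ring
    _ ≤ _ := Finset.sum_le_sum fun i _ => h i
  have := sum_lam_le_one S q
  linarith

end SpreadAux

section BigH

variable {V : Type} [Fintype V] {G : SimpleGraph V} {m : ℕ}

/-- threshold constant -/
noncomputable def epsm (m : ℕ) : ℝ := 1 / (2 * (m + 2))

lemma epsm_pos (m : ℕ) : 0 < epsm m := by unfold epsm; positivity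

noncomputable def rF (m : ℕ) (av : Fin (m + 2) → ℝ) (i : Fin (m + 2)) : ℝ :=
  min 1 (av i / epsm m)

noncomputable def rhoF (S : Spread G m) (av : Fin (m + 2) → ℝ) (x : V) : ℝ :=
  ∑ i, if G.Adj x (S.w i) then rF m av i else 0

noncomputable def RF (S : Spread G m) (av : Fin (m + 2) → ℝ)
    (q : G.indepComplex.space) : ℝ :=
  ∑ i, rF m av i * lam S i q

noncomputable def bF (m : ℕ) (av : Fin (m + 2) → ℝ) (i : Fin (m + 2)) : ℝ :=
  max (av i - epsm m) 0

noncomputable def SbF (m : ℕ) (av : Fin (m + 2) → ℝ) : ℝ := ∑ i, bF m av i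

noncomputable def th1 (θ : ℝ) : ℝ := min 1 (3 * θ)
noncomputable def th2 (θ : ℝ) : ℝ := min 1 (max 0 (3 * θ - 1))
noncomputable def th3 (θ : ℝ) : ℝ := min 1 (max 0 (3 * θ - 2))

/-- The three-stage deformation formula. -/
noncomputable def FF (S : Spread G m) (av : Fin (m + 2) → ℝ) (q : G.indepComplex.space)
    (θ : ℝ) (x : V) : ℝ :=
  (1 - th3 θ) * ((1 - th2 θ) *
      (q.1 x * (1 - th1 θ * rhoF S av x) / (1 - th1 θ * RF S av q))
    + th2 θ * (∑ i, if x = S.w i then bF m av i / SbF m av else 0))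
  + th3 θ * (if x = S.w 0 then 1 else 0)

/-- Hypotheses on the weights at a point. -/
structure GoodA (S : Spread G m) (av : Fin (m + 2) → ℝ) (q : G.indepComplex.space) :
    Prop where
  nonneg : ∀ i, 0 ≤ av i
  sum_one : ∑ i, av i = 1
  sub : ∀ i, av i ≠ 0 → (m + 1 : ℝ) * lam S i q < 1
  card : (Finset.univ.filter fun i => av i ≠ 0).card ≤ m + 1

variable {S : Spread G m} {av : Fin (m + 2) → ℝ} {q : G.indepComplex.space} {θ : ℝ}

section ThetaFacts

lemma th1_mem (hθ0 : 0 ≤ θ) : 0 ≤ th1 θ ∧ th1 θ ≤ 1 := by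
  unfold th1; constructor
  · positivity
  · exact min_le_left _ _

lemma th2_mem : 0 ≤ th2 θ ∧ th2 θ ≤ 1 := by
  unfold th2; constructor
  · positivity
  · exact min_le_left _ _

lemma th3_mem : 0 ≤ th3 θ ∧ th3 θ ≤ 1 := by
  unfold th3; constructor
  · positivity
  · exact min_le_left _ _

lemma th2_ne_zero (h : th2 θ ≠ 0) : th1 θ = 1 := by
  unfold th2 at h; unfold th1
  rcases le_or_gt (3 * θ - 1) 0 with h'|h'
  · exfalso; apply h; rw [max_eq_left h']; simp
  · rw [min_eq_left]; linarith

lemma th3_ne_zero (h : th3 θ ≠ 0) : th2 θ = 1 := by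
  unfold th3 at h; unfold th2
  rcases le_or_gt (3 * θ - 2) 0 with h'|h'
  · exfalso; apply h; rw [max_eq_left h']; simp
  · rw [max_eq_right (by linarith : (0:ℝ) ≤ 3 * θ - 1),
      min_eq_left (by linarith : (1:ℝ) ≤ 3 * θ - 1)]

lemma th_at_zero : th1 0 = 0 ∧ th2 0 = 0 ∧ th3 0 = 0 := by
  unfold th1 th2 th3; norm_num

lemma th_at_one : th3 1 = 1 := by unfold th3; norm_num

end ThetaFacts

section PointwiseFacts

lemma rF_nonneg (hA : GoodA S av q) (i : Fin (m + 2)) : 0 ≤ rF m av i :=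
  le_min (by norm_num) (div_nonneg (hA.nonneg i) (epsm_pos m).le)

lemma rF_le_one : rF m av i ≤ 1 := min_le_left _ _

lemma rF_ne_zero (h : rF m av i ≠ 0) : av i ≠ 0 := by
  intro h'
  apply h
  unfold rF
  rw [h']
  norm_num

lemma rF_eq_one (hi : epsm m < av i) : rF m av i = 1 := by
  unfold rF
  rw [min_eq_left]
  rw [le_div_iff₀ (epsm_pos m)]
  linarith

/-- `rhoF` evaluates to a single `rF` term or `0`. -/
lemma rhoF_eq_single {x : V} {i : Fin (m + 2)} (hxi : G.Adj x (S.w i)) :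
    rhoF S av x = rF m av i := by
  unfold rhoF
  rw [Finset.sum_eq_single_of_mem i (Finset.mem_univ i)]
  · rw [if_pos hxi]
  · intro j _ hj
    exact if_neg (fun hadj => hj (S.blocker x j i hadj hxi))

lemma rhoF_eq_zero {x : V} (hx : ∀ i, ¬ G.Adj x (S.w i)) : rhoF S av x = 0 := by
  unfold rhoF
  exact Finset.sum_eq_zero fun i _ => if_neg (hx i)

lemma rhoF_nonneg (hA : GoodA S av q) (x : V) : 0 ≤ rhoF S av x := by
  by_cases hx : ∃ i, G.Adj x (S.w i)
  · obtain ⟨i, hi⟩ := hx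
    rw [rhoF_eq_single hi]
    exact rF_nonneg hA i
  · push_neg at hx
    rw [rhoF_eq_zero hx]

lemma rhoF_le_one (x : V) : rhoF S av x ≤ 1 := by
  by_cases hx : ∃ i, G.Adj x (S.w i)
  · obtain ⟨i, hi⟩ := hx
    rw [rhoF_eq_single (av := av) hi]
    exact rF_le_one
  · push_neg at hx
    rw [rhoF_eq_zero hx]
    norm_num

lemma RF_nonneg (hA : GoodA S av q) : 0 ≤ RF S av q :=
  Finset.sum_nonneg fun i _ => mul_nonneg (rF_nonneg hA i) (lam_nonneg S i q)

lemma RF_lt_one (hA : GoodA S av q) : RF S av q < 1 := by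
  classical
  set A := Finset.univ.filter (fun i => av i ≠ 0) with hA_def
  have hle : RF S av q ≤ ∑ i ∈ A, lam S i q := by
    unfold RF
    rw [← Finset.sum_filter_add_sum_filter_not Finset.univ (fun i => av i ≠ 0)
      (fun i => rF m av i * lam S i q)]
    have h2 : ∑ i ∈ Finset.univ.filter (fun i => ¬ av i ≠ 0),
        rF m av i * lam S i q = 0 := by
      apply Finset.sum_eq_zero
      intro i hi
      rw [Finset.mem_filter] at hi
      have : rF m av i = 0 := by
        by_contra hr
        exact hi.2 (rF_ne_zero hr)
      rw [this, zero_mul]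
    rw [h2, add_zero]
    apply Finset.sum_le_sum
    intro i _
    calc rF m av i * lam S i q ≤ 1 * lam S i q := by
          apply mul_le_mul_of_nonneg_right rF_le_one (lam_nonneg S i q)
    _ = lam S i q := one_mul _
  rcases Finset.eq_empty_or_nonempty A with hA0 | hA1
  · rw [hA0] at hle
    simp at hle
    linarith
  · have hlt : ∑ i ∈ A, lam S i q < ∑ _i ∈ A, (1 / (m + 1 : ℝ)) := by
      apply Finset.sum_lt_sum_of_nonempty hA1
      intro i hi
      rw [hA_def, Finset.mem_filter] at hi
      have := hA.sub i hi.2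
      rw [lt_div_iff₀ (by positivity : (0:ℝ) < (m + 1 : ℝ))]
      linarith
    have hcard : ∑ _i ∈ A, (1 / (m + 1 : ℝ)) ≤ 1 := by
      rw [Finset.sum_const, nsmul_eq_mul]
      have hc : (A.card : ℝ) ≤ (m + 1 : ℝ) := by
        have := hA.card
        rw [← hA_def] at this
        exact_mod_cast by exact_mod_cast Nat.cast_le.mpr this
      rw [div_eq_mul_inv, ← mul_assoc]
      calc (A.card : ℝ) * 1 * ((m:ℝ) + 1)⁻¹ ≤ ((m:ℝ) + 1) * 1 * ((m:ℝ)+1)⁻¹ := by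
            apply mul_le_mul_of_nonneg_right _ (by positivity)
            simpa using hc
      _ = 1 := by field_simp
    linarith

lemma denom_pos (hA : GoodA S av q) (hθ0 : 0 ≤ θ) : 0 < 1 - th1 θ * RF S av q := by
  have h1 := th1_mem (θ := θ) hθ0
  have h2 := RF_lt_one hA
  have h3 := RF_nonneg hA
  nlinarith

lemma SbF_pos (hA : GoodA S av q) : epsm m ≤ SbF m av := by
  have hmax : ∃ i, 1 / (m + 2 : ℝ) ≤ av i := by
    by_contra h
    push_neg at h
    have : ∑ i, av i < ∑ _i : Fin (m + 2), (1 / (m + 2 : ℝ)) :=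
      Finset.sum_lt_sum_of_nonempty Finset.univ_nonempty (fun i _ => h i)
    rw [hA.sum_one, Finset.sum_const, Finset.card_univ, Fintype.card_fin,
      nsmul_eq_mul] at this
    have : ((m : ℝ) + 2) * (1 / ((m:ℝ) + 2)) = 1 := by field_simp
    simp only [Nat.cast_add, Nat.cast_ofNat] at *
    linarith
  obtain ⟨i, hi⟩ := hmax
  have hb : epsm m ≤ bF m av i := by
    unfold bF epsm
    rw [le_max_iff]
    left
    have h2 : (1:ℝ) / (2 * ((m:ℝ) + 2)) = 1/((m:ℝ)+2) - 1/(2*((m:ℝ)+2)) := by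
      field_simp; ring
    push_cast
    push_cast at hi
    linarith [hi]
  calc epsm m ≤ bF m av i := hb
  _ ≤ SbF m av := Finset.single_le_sum (f := fun i => bF m av i)
      (fun j _ => le_max_right _ _) (Finset.mem_univ i)

lemma bF_ne_zero {i : Fin (m + 2)} (h : bF m av i ≠ 0) : epsm m < av i := by
  unfold bF at h
  rcases le_or_gt (av i) (epsm m) with h'|h'
  · exfalso; apply h; rw [max_eq_right]; linarith
  · exact h'

end PointwiseFacts

end BigH

section BigH2

variable {V : Type} [Fintype V] {G : SimpleGraph V} {m : ℕ}
variable {S : Spread G m} {av : Fin (m + 2) → ℝ} {q : G.indepComplex.space} {θ : ℝ}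

lemma sum_q_rho : ∑ x, q.1 x * rhoF S av x = RF S av q := by
  unfold rhoF RF lam
  simp_rw [Finset.mul_sum]
  rw [Finset.sum_comm]
  apply Finset.sum_congr rfl
  intro i _
  apply Finset.sum_congr rfl
  intro x _
  by_cases h : G.Adj x (S.w i) <;> simp [h, mul_comm]

lemma FF_sum (hA : GoodA S av q) (hθ0 : 0 ≤ θ) : ∑ x, FF S av q θ x = 1 := by
  have hD := denom_pos hA hθ0
  have hq : ∑ x, q.1 x * (1 - th1 θ * rhoF S av x) / (1 - th1 θ * RF S av q) = 1 := by
    rw [← Finset.sum_div]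
    have h1 : ∀ x : V, q.1 x * (1 - th1 θ * rhoF S av x)
        = q.1 x - th1 θ * (q.1 x * rhoF S av x) := fun x => by ring
    simp_rw [h1]
    rw [Finset.sum_sub_distrib, ← Finset.mul_sum, sum_q_rho, X_sum_one]
    field_simp
  have hpsi : ∑ x, (∑ i, if x = S.w i then bF m av i / SbF m av else 0) = 1 := by
    rw [Finset.sum_comm]
    have h2 : ∀ i : Fin (m + 2),
        ∑ x, (if x = S.w i then bF m av i / SbF m av else 0) = bF m av i / SbF m av := by
      intro i
      rw [Finset.sum_ite_eq' Finset.univ (S.w i) (fun _ => bF m av i / SbF m av)]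
      simp
    simp_rw [h2]
    rw [← Finset.sum_div]
    have hSb : SbF m av ≠ 0 := ne_of_gt (lt_of_lt_of_le (epsm_pos m) (SbF_pos hA))
    unfold SbF at hSb ⊢
    field_simp
  have hdel : ∑ x, (if x = S.w 0 then (1:ℝ) else 0) = 1 := by
    rw [Finset.sum_ite_eq' Finset.univ (S.w 0) (fun _ => (1:ℝ))]
    simp
  unfold FF
  rw [Finset.sum_add_distrib, ← Finset.mul_sum, ← Finset.mul_sum,
    Finset.sum_add_distrib, ← Finset.mul_sum, ← Finset.mul_sum, hq, hpsi, hdel]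
  ring

lemma FF_nonneg (hA : GoodA S av q) (hθ0 : 0 ≤ θ) (x : V) : 0 ≤ FF S av q θ x := by
  have hD := denom_pos hA hθ0
  have h1 := th1_mem (θ := θ) hθ0
  have h2 := th2_mem (θ := θ)
  have h3 := th3_mem (θ := θ)
  have hρ0 := rhoF_nonneg hA x
  have hρ1 := rhoF_le_one (S := S) (av := av) x
  have hq0 := X_coord_nonneg q x
  have hb : 0 ≤ ∑ i, (if x = S.w i then bF m av i / SbF m av else 0) := by
    apply Finset.sum_nonneg
    intro i _
    have hSb : 0 < SbF m av := lt_of_lt_of_le (epsm_pos m) (SbF_pos hA)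
    have hbnn : 0 ≤ bF m av i := le_max_right _ _
    by_cases h : x = S.w i
    · rw [if_pos h]; exact div_nonneg hbnn hSb.le
    · rw [if_neg h]
  have hd : (0:ℝ) ≤ (if x = S.w 0 then (1:ℝ) else 0) := by
    by_cases h : x = S.w 0 <;> simp [h]
  unfold FF
  have ht1ρ : th1 θ * rhoF S av x ≤ 1 := by nlinarith
  have : 0 ≤ q.1 x * (1 - th1 θ * rhoF S av x) / (1 - th1 θ * RF S av q) := by
    apply div_nonneg _ hD.le
    apply mul_nonneg hq0
    linarith
  have s1 : 0 ≤ (1 - th2 θ) * (q.1 x * (1 - th1 θ * rhoF S av x) / (1 - th1 θ * RF S av q)) :=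
    mul_nonneg (by linarith [h2.2]) this
  have s2 : 0 ≤ th2 θ * ∑ i, (if x = S.w i then bF m av i / SbF m av else 0) :=
    mul_nonneg h2.1 hb
  have s3 : 0 ≤ (1 - th3 θ) * ((1 - th2 θ) * (q.1 x * (1 - th1 θ * rhoF S av x) / (1 - th1 θ * RF S av q)) + th2 θ * ∑ i, (if x = S.w i then bF m av i / SbF m av else 0)) :=
    mul_nonneg (by linarith [h3.2]) (by linarith)
  have s4 : 0 ≤ th3 θ * (if x = S.w 0 then (1:ℝ) else 0) := mul_nonneg h3.1 hd
  linarith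

lemma FF_cases (h : FF S av q θ x ≠ 0) :
    (q.1 x ≠ 0 ∧ th2 θ ≠ 1 ∧ th1 θ * rhoF S av x ≠ 1) ∨
    (∃ i, x = S.w i ∧ ((bF m av i ≠ 0 ∧ th2 θ ≠ 0) ∨ th3 θ ≠ 0)) := by
  unfold FF at h
  have h' : (1 - th3 θ) * (1 - th2 θ) *
        (q.1 x * (1 - th1 θ * rhoF S av x) / (1 - th1 θ * RF S av q)) ≠ 0 ∨
      (1 - th3 θ) * th2 θ *
        (∑ i, if x = S.w i then bF m av i / SbF m av else 0) ≠ 0 ∨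
      th3 θ * (if x = S.w 0 then (1:ℝ) else 0) ≠ 0 := by
    by_contra hc
    push_neg at hc
    apply h
    rw [show (1 - th3 θ) * ((1 - th2 θ) *
        (q.1 x * (1 - th1 θ * rhoF S av x) / (1 - th1 θ * RF S av q))
      + th2 θ * (∑ i, if x = S.w i then bF m av i / SbF m av else 0))
      + th3 θ * (if x = S.w 0 then (1:ℝ) else 0)
      = (1 - th3 θ) * (1 - th2 θ) *
        (q.1 x * (1 - th1 θ * rhoF S av x) / (1 - th1 θ * RF S av q))
      + (1 - th3 θ) * th2 θ *
        (∑ i, if x = S.w i then bF m av i / SbF m av else 0)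
      + th3 θ * (if x = S.w 0 then (1:ℝ) else 0) from by ring]
    rw [hc.1, hc.2.1, hc.2.2]
    ring
  rcases h' with h1 | h2 | h3
  · left
    have hne := mul_ne_zero_iff.mp h1
    have hne2 := mul_ne_zero_iff.mp hne.1
    have hq := div_ne_zero_iff.mp hne.2
    have hqq := mul_ne_zero_iff.mp hq.1
    refine ⟨hqq.1, fun h => hne2.2 (by rw [h]; ring), fun h => hqq.2 (by rw [h]; ring)⟩
  · right
    have hne := mul_ne_zero_iff.mp h2
    have hne2 := mul_ne_zero_iff.mp hne.1
    obtain ⟨i, _, hi⟩ := Finset.exists_ne_zero_of_sum_ne_zero hne.2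
    by_cases hxi : x = S.w i
    · rw [if_pos hxi] at hi
      have hb := div_ne_zero_iff.mp hi
      exact ⟨i, hxi, Or.inl ⟨hb.1, hne2.2⟩⟩
    · rw [if_neg hxi] at hi
      exact absurd rfl hi
  · have hne := mul_ne_zero_iff.mp h3
    by_cases hx0 : x = S.w 0
    · exact Or.inr ⟨0, hx0, Or.inr hne.1⟩
    · rw [if_neg hx0] at hne
      exact absurd rfl hne.2

lemma FF_indep (hA : GoodA S av q) :
    ∀ x y, FF S av q θ x ≠ 0 → FF S av q θ y ≠ 0 → ¬ G.Adj x y := by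
  have key : ∀ x y, FF S av q θ x ≠ 0 →
      (∃ i, y = S.w i ∧ ((bF m av i ≠ 0 ∧ th2 θ ≠ 0) ∨ th3 θ ≠ 0)) →
      (q.1 x ≠ 0 ∧ th2 θ ≠ 1 ∧ th1 θ * rhoF S av x ≠ 1) → ¬ G.Adj x y := by
    rintro x y _ ⟨i, rfl, hcase⟩ ⟨_, ht2, ht1ρ⟩ hadj
    rcases hcase with ⟨hbi, ht2'⟩ | ht3
    · have h1 : th1 θ = 1 := th2_ne_zero ht2'
      have hr : rF m av i = 1 := rF_eq_one (bF_ne_zero hbi)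
      have hρ : rhoF S av x = 1 := by rw [rhoF_eq_single hadj, hr]
      exact ht1ρ (by rw [h1, hρ]; ring)
    · exact ht2 (th3_ne_zero ht3)
  intro x y hx hy hadj
  rcases FF_cases hx with hx1 | hx2 <;> rcases FF_cases hy with hy1 | hy2
  · exact X_indep q hx1.1 hy1.1 hadj
  · exact key x y hx hy2 hx1 hadj
  · exact key y x hy hx2 hy1 hadj.symm
  · obtain ⟨i, rfl, _⟩ := hx2
    obtain ⟨j, rfl, _⟩ := hy2
    exact S.not_adj i j hadj

lemma FF_theta_zero (x : V) : FF S av q 0 x = q.1 x := by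
  unfold FF th1 th2 th3
  norm_num

lemma FF_theta_one (x : V) : FF S av q 1 x = (if x = S.w 0 then 1 else 0) := by
  unfold FF th1 th2 th3
  norm_num

end BigH2

section BigH3

variable {V : Type} [Fintype V] {G : SimpleGraph V} {m : ℕ}
variable {Y : Type*} [TopologicalSpace Y]

/-- The three-stage deformation, as a map defined on a parameter space `Y`. -/
noncomputable def bigHmap (S : Spread G m) (qf : Y → G.indepComplex.space)
    (af : Y → Fin (m + 2) → ℝ) (θf : Y → ℝ)
    (hA : ∀ y, GoodA S (af y) (qf y)) (hθ : ∀ y, 0 ≤ θf y ∧ θf y ≤ 1) :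
    Y → G.indepComplex.space :=
  fun y => mkX (fun x => FF S (af y) (qf y) (θf y) x)
    (fun x => FF_nonneg (hA y) (hθ y).1 x) (FF_sum (hA y) (hθ y).1)
    (FF_indep (hA y))

variable {S : Spread G m} {qf : Y → G.indepComplex.space}
  {af : Y → Fin (m + 2) → ℝ} {θf : Y → ℝ}
  {hA : ∀ y, GoodA S (af y) (qf y)} {hθ : ∀ y, 0 ≤ θf y ∧ θf y ≤ 1}

lemma bigHmap_coe (y : Y) (x : V) :
    (bigHmap S qf af θf hA hθ y).1 x = FF S (af y) (qf y) (θf y) x := rfl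

lemma continuous_bigHmap (hq : Continuous qf) (ha : ∀ i, Continuous fun y => af y i)
    (hθc : Continuous θf) : Continuous (bigHmap S qf af θf hA hθ) := by
  apply continuous_mkX
  intro x
  have cth1 : Continuous fun y => th1 (θf y) :=
    continuous_const.min (continuous_const.mul hθc)
  have cth2 : Continuous fun y => th2 (θf y) :=
    continuous_const.min (continuous_const.max ((continuous_const.mul hθc).sub continuous_const))
  have cth3 : Continuous fun y => th3 (θf y) :=
    continuous_const.min (continuous_const.max ((continuous_const.mul hθc).sub continuous_const))
  have crF : ∀ i, Continuous fun y => rF m (af y) i := fun i =>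
    continuous_const.min ((ha i).div_const _)
  have crho : ∀ x' : V, Continuous fun y => rhoF S (af y) x' := by
    intro x'
    unfold rhoF
    apply continuous_finset_sum
    intro i _
    by_cases h : G.Adj x' (S.w i) <;> simp [h, crF i, continuous_const]
  have cRF : Continuous fun y => RF S (af y) (qf y) := by
    unfold RF
    apply continuous_finset_sum
    intro i _
    exact (crF i).mul ((continuous_lam S i).comp hq)
  have cden : Continuous fun y => 1 - th1 (θf y) * RF S (af y) (qf y) :=
    continuous_const.sub (cth1.mul cRF)
  have hden : ∀ y, 1 - th1 (θf y) * RF S (af y) (qf y) ≠ 0 := fun y =>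
    (denom_pos (hA y) (hθ y).1).ne'
  have cb : ∀ i, Continuous fun y => bF m (af y) i := fun i =>
    ((ha i).sub continuous_const).max continuous_const
  have cSb : Continuous fun y => SbF m (af y) := by
    unfold SbF
    exact continuous_finset_sum _ (fun i _ => cb i)
  have hSb : ∀ y, SbF m (af y) ≠ 0 := fun y =>
    (lt_of_lt_of_le (epsm_pos m) (SbF_pos (hA y))).ne'
  have cq : ∀ x' : V, Continuous fun y => (qf y).1 x' := fun x' =>
    (continuous_X_coord x').comp hq
  have cpsi : Continuous fun y =>
      ∑ i, (if x = S.w i then bF m (af y) i / SbF m (af y) else 0) := by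
    apply continuous_finset_sum
    intro i _
    by_cases h : x = S.w i
    · simp only [h, if_true]
      exact (cb i).div cSb hSb
    · simp only [h, if_false]
      exact continuous_const
  unfold FF
  apply Continuous.add
  · apply Continuous.mul (continuous_const.sub cth3)
    apply Continuous.add
    · apply Continuous.mul (continuous_const.sub cth2)
      exact ((cq x).mul (continuous_const.sub (cth1.mul (crho x)))).div cden hden
    · exact cth2.mul cpsi
  · exact cth3.mul continuous_const

lemma bigHmap_theta_zero {y : Y} (h : θf y = 0) :
    bigHmap S qf af θf hA hθ y = qf y := by
  apply Subtype.ext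
  funext x
  rw [bigHmap_coe, h, FF_theta_zero]

lemma bigHmap_theta_one {y : Y} (h : θf y = 1) :
    bigHmap S qf af θf hA hθ y = vertexPt (S.w 0) := by
  apply Subtype.ext
  funext x
  rw [bigHmap_coe, h, FF_theta_one]
  rfl

lemma bigHmap_congr {y y' : Y} (h1 : qf y = qf y') (h2 : af y = af y')
    (h3 : θf y = θf y') : bigHmap S qf af θf hA hθ y = bigHmap S qf af θf hA hθ y' := by
  apply Subtype.ext
  funext x
  rw [bigHmap_coe, bigHmap_coe, h1, h2, h3]

end BigH3

section Dim0

variable {V : Type} [Fintype V] {G : SimpleGraph V} {m : ℕ}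

lemma goodA_single (S : Spread G m) (e : G.indepComplex.space) (i₀ : Fin (m + 2))
    (h : (m + 1 : ℝ) * lam S i₀ e < 1) :
    GoodA S (fun i => if i = i₀ then 1 else 0) e := by
  constructor
  · intro i; by_cases hi : i = i₀ <;> simp [hi]
  · simp
  · intro i hi
    by_cases hii : i = i₀
    · rw [hii]; exact h
    · simp [hii] at hi
  · have hsub : (Finset.univ.filter fun i : Fin (m + 2) =>
        (if i = i₀ then (1:ℝ) else 0) ≠ 0) ⊆ {i₀} := by
      intro i hi
      rw [Finset.mem_filter] at hi
      by_cases hii : i = i₀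
      · simp [hii]
      · simp [hii] at hi
    calc _ ≤ ({i₀} : Finset (Fin (m+2))).card := Finset.card_le_card hsub
    _ ≤ m + 1 := by simp

lemma one_lt_aux (m : ℕ) : (1:ℝ) < (m + 2 : ℝ) * (1 / (m + 1 : ℝ)) := by
  rw [mul_one_div, lt_div_iff₀ (by positivity : (0:ℝ) < (m + 1 : ℝ))]
  norm_num

lemma lam_small_good (S : Spread G m) (e : G.indepComplex.space) {i : Fin (m+2)}
    (h : lam S i e < 1 / (m + 1 : ℝ)) : (m + 1 : ℝ) * lam S i e < 1 := by
  have h2 : (0:ℝ) < (m + 1 : ℝ) := by positivity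
  calc (m + 1 : ℝ) * lam S i e < (m + 1 : ℝ) * (1 / (m + 1 : ℝ)) := by
        exact mul_lt_mul_of_pos_left h h2
  _ = 1 := by field_simp

set_option maxHeartbeats 1000000 in
/-- An explicit path from any point of the realization to `vertexPt (S.w 0)`. -/
noncomputable def pathToW0 (S : Spread G m) (e : G.indepComplex.space) :
    Path e (vertexPt (S.w 0)) := by
  classical
  have hex := exists_lam_lt S e (one_lt_aux m)
  have hlam : lam S hex.choose e < 1 / (m + 1 : ℝ) := hex.choose_spec
  let af : unitInterval → Fin (m + 2) → ℝ := fun _ i => if i = hex.choose then 1 else 0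
  let qf : unitInterval → G.indepComplex.space := fun _ => e
  let θf : unitInterval → ℝ := fun s => (s : ℝ)
  have hA : ∀ s, GoodA S (af s) (qf s) :=
    fun _ => goodA_single S e hex.choose (lam_small_good S e hlam)
  have hθ : ∀ s, 0 ≤ θf s ∧ θf s ≤ 1 := fun s => ⟨s.2.1, s.2.2⟩
  refine { toFun := bigHmap S qf af θf hA hθ, continuous_toFun := ?_,
           source' := ?_, target' := ?_ }
  · exact continuous_bigHmap continuous_const (fun i => continuous_const)
      continuous_subtype_val
  · exact bigHmap_theta_zero (hA := hA) (hθ := hθ) (show θf 0 = 0 by simp [θf])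
  · exact bigHmap_theta_one (hA := hA) (hθ := hθ) (show θf 1 = 1 by simp [θf])

lemma genloop_null_dim0 (S : Spread G 0) (x : G.indepComplex.space)
    (f : GenLoop (Fin 0) G.indepComplex.space x) :
    GenLoop.Homotopic f GenLoop.const := by
  classical
  let p₀ : (Fin 0) → unitInterval := fun i => i.elim0
  let P : Path (f.1 p₀) x := (pathToW0 S (f.1 p₀)).trans (pathToW0 S x).symm
  refine ⟨{ toFun := fun sp => P sp.1,
            continuous_toFun := P.continuous.comp continuous_fst,
            map_zero_left := ?_, map_one_left := ?_, prop' := ?_ }⟩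
  · intro p
    show P 0 = f.1 p
    rw [P.source]
    exact congrArg f.1 (Subsingleton.elim p₀ p)
  · intro p
    show P 1 = _
    rw [P.target]
    rfl
  · intro t y hy
    obtain ⟨i, _⟩ := hy
    exact i.elim0

end Dim0

section Hats

variable {m N : ℕ}

/-- Adjusted floor of the scaled coordinate. -/
noncomputable def aflr (N : ℕ) (p : Fin m → unitInterval) (i : Fin m) : ℕ :=
  min (Nat.floor ((N : ℝ) * (p i : ℝ))) (N - 1)

/-- Adjusted fractional part. -/
noncomputable def fpart (N : ℕ) (p : Fin m → unitInterval) (i : Fin m) : ℝ :=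
  (N : ℝ) * (p i : ℝ) - aflr N p i

lemma fpart_nonneg (p : Fin m → unitInterval) (i : Fin m) : 0 ≤ fpart N p i := by
  unfold fpart aflr
  have h1 : ((min (Nat.floor ((N : ℝ) * (p i : ℝ))) (N - 1) : ℕ) : ℝ)
      ≤ ((Nat.floor ((N : ℝ) * (p i : ℝ)) : ℕ) : ℝ) := Nat.cast_le.mpr (min_le_left _ _)
  have h2 : ((Nat.floor ((N : ℝ) * (p i : ℝ)) : ℕ) : ℝ) ≤ (N : ℝ) * (p i : ℝ) :=
    Nat.floor_le (mul_nonneg (Nat.cast_nonneg N) (p i).2.1)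
  linarith

lemma fpart_le_one (hN : 0 < N) (p : Fin m → unitInterval) (i : Fin m) :
    fpart N p i ≤ 1 := by
  unfold fpart aflr
  rcases le_or_gt (Nat.floor ((N : ℝ) * (p i : ℝ))) (N - 1) with h | h
  · rw [min_eq_left h]
    have := Nat.lt_floor_add_one ((N : ℝ) * (p i : ℝ))
    push_cast
    linarith
  · rw [min_eq_right (by omega : N - 1 ≤ Nat.floor ((N : ℝ) * (p i : ℝ)))]
    have hple : (N : ℝ) * (p i : ℝ) ≤ N := by
      have h2 := (p i).2.2
      have h3 : (0:ℝ) ≤ N := Nat.cast_nonneg N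
      nlinarith
    have : (N - 1 : ℕ) = (N : ℝ) - 1 := by
      have : 1 ≤ N := hN
      push_cast [Nat.cast_sub this]
      ring
    rw [this]
    linarith

lemma aflr_le (hN : 0 < N) (p : Fin m → unitInterval) (i : Fin m) :
    aflr N p i ≤ N - 1 := min_le_right _ _

/-- Displacement of a lattice point. -/
noncomputable def ddf (N : ℕ) (z : Fin m → Fin (N + 1)) (p : Fin m → unitInterval)
    (i : Fin m) : ℝ :=
  (N : ℝ) * (p i : ℝ) - (z i : ℕ)

/-- The PL hat function of the Freudenthal-type partition. -/
noncomputable def hatf (hu : (Finset.univ : Finset (Fin m)).Nonempty) (N : ℕ)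
    (z : Fin m → Fin (N + 1)) (p : Fin m → unitInterval) : ℝ :=
  max 0 (1 + min 0 (Finset.univ.inf' hu (ddf N z p))
    - max 0 (Finset.univ.sup' hu (ddf N z p)))

variable {hu : (Finset.univ : Finset (Fin m)).Nonempty}

lemma hatf_nonneg (z : Fin m → Fin (N + 1)) (p : Fin m → unitInterval) :
    0 ≤ hatf hu N z p := le_max_left _ _

lemma continuous_hatf (z : Fin m → Fin (N + 1)) :
    Continuous fun p : Fin m → unitInterval => hatf hu N z p := by
  have hd : ∀ i, Continuous fun p : Fin m → unitInterval => ddf N z p i := by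
    intro i
    unfold ddf
    exact (continuous_const.mul (continuous_subtype_val.comp (continuous_apply i))).sub
      continuous_const
  apply continuous_const.max
  apply Continuous.sub
  · apply continuous_const.add
    exact continuous_const.min (continuous_finset_inf' hu hd)
  · exact continuous_const.max (continuous_finset_sup' hu hd)

lemma hatf_pos_of_ne (z : Fin m → Fin (N + 1)) (p : Fin m → unitInterval)
    (h : hatf hu N z p ≠ 0) :
    0 < 1 + min 0 (Finset.univ.inf' hu (ddf N z p))
      - max 0 (Finset.univ.sup' hu (ddf N z p)) := by
  by_contra hc
  push_neg at hc
  exact h (max_eq_left hc)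

lemma hatf_support (z : Fin m → Fin (N + 1)) (p : Fin m → unitInterval)
    (h : hatf hu N z p ≠ 0) (i : Fin m) : |ddf N z p i| < 1 := by
  have hpos := hatf_pos_of_ne z p h
  have h1 : Finset.univ.inf' hu (ddf N z p) ≤ ddf N z p i :=
    Finset.inf'_le _ (Finset.mem_univ i)
  have h2 : ddf N z p i ≤ Finset.univ.sup' hu (ddf N z p) :=
    Finset.le_sup' _ (Finset.mem_univ i)
  have h3 : min 0 (Finset.univ.inf' hu (ddf N z p)) ≤ 0 := min_le_left _ _
  have h4 : (0:ℝ) ≤ max 0 (Finset.univ.sup' hu (ddf N z p)) := le_max_left _ _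
  have h5 : min 0 (Finset.univ.inf' hu (ddf N z p)) ≤ ddf N z p i :=
    le_trans (min_le_right _ _) h1
  have h6 : ddf N z p i ≤ max 0 (Finset.univ.sup' hu (ddf N z p)) :=
    le_trans h2 (le_max_right _ _)
  rw [abs_lt]
  constructor <;> linarith

lemma hatf_support_nat (hN : 0 < N) (z : Fin m → Fin (N + 1)) (p : Fin m → unitInterval)
    (h : hatf hu N z p ≠ 0) (i : Fin m) :
    (z i : ℕ) = aflr N p i ∨ (z i : ℕ) = aflr N p i + 1 := by
  have hs := hatf_support z p h i
  rw [abs_lt] at hs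
  unfold ddf at hs
  have hf0 := fpart_nonneg (N := N) p i
  have hf1 := fpart_le_one hN p i
  unfold fpart at hf0 hf1
  have h1 : ((aflr N p i : ℕ) : ℝ) < ((z i : ℕ) : ℝ) + 1 := by linarith [hs.2]
  have h2 : ((z i : ℕ) : ℝ) < ((aflr N p i : ℕ) : ℝ) + 2 := by linarith [hs.1]
  have h1' : aflr N p i < (z i : ℕ) + 1 := by exact_mod_cast h1
  have h2' : (z i : ℕ) < aflr N p i + 2 := by exact_mod_cast h2
  omega

end Hats

section HatSum

lemma tri_identity (c M X : ℝ) :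
    max 0 (min c M - X) + max 0 (M - max c X) = max 0 (M - X) := by
  simp only [max_def, min_def]
  split_ifs <;> linarith

lemma sum1 {ι : Type*} [DecidableEq ι] (S : Finset ι) (F : ι → ℝ) :
    (∀ i ∈ S, 0 ≤ F i ∧ F i ≤ 1) →
    ∑ T ∈ S.powerset,
      max 0 ((if h : T.Nonempty then T.inf' h F else 1)
        - (if h : (S \ T).Nonempty then (S \ T).sup' h F else 0)) = 1 := by
  induction S using Finset.induction_on with
  | empty => intro _; simp
  | @insert a s ha ih =>
    intro hF
    have hFa := hF a (Finset.mem_insert_self a s)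
    rw [Finset.sum_powerset_insert ha, ← Finset.sum_add_distrib]
    refine Eq.trans (Finset.sum_congr rfl ?_)
      (ih (fun i hi => hF i (Finset.mem_insert_of_mem hi)))
    intro T hT
    rw [Finset.mem_powerset] at hT
    have haT : a ∉ T := fun h => ha (hT h)
    set M := (if h : T.Nonempty then T.inf' h F else 1) with hM
    set X := (if h : (s \ T).Nonempty then (s \ T).sup' h F else 0) with hX
    have e1 : (insert a s) \ T = insert a (s \ T) := by
      ext x
      simp only [Finset.mem_sdiff, Finset.mem_insert]
      constructor
      · rintro ⟨hx1 | hx1, hx2⟩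
        · exact Or.inl hx1
        · exact Or.inr ⟨hx1, hx2⟩
      · rintro (rfl | ⟨hx1, hx2⟩)
        · exact ⟨Or.inl rfl, haT⟩
        · exact ⟨Or.inr hx1, hx2⟩
    have e2 : (insert a s) \ (insert a T) = s \ T := by
      ext x
      simp only [Finset.mem_sdiff, Finset.mem_insert]
      constructor
      · rintro ⟨hx1 | hx1, hx2⟩
        · exact absurd (Or.inl hx1) hx2
        · refine ⟨hx1, fun hxt => hx2 (Or.inr hxt)⟩
      · rintro ⟨hx1, hx2⟩
        exact ⟨Or.inr hx1, fun h => by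
          rcases h with rfl | h
          · exact ha hx1
          · exact hx2 h⟩
    have E1 : (if h : ((insert a s) \ T).Nonempty then ((insert a s) \ T).sup' h F else 0)
        = max (F a) X := by
      rw [e1]
      rw [dif_pos (Finset.insert_nonempty _ _)]
      rcases (s \ T).eq_empty_or_nonempty with he | hne
      · rw [he]
        rw [hX, dif_neg (by simp [he])]
        rw [max_eq_left hFa.1]
        exact Finset.sup'_singleton F (b := a)
      · rw [Finset.sup'_insert hne]
        rw [hX, dif_pos hne]
    have E2 : (if h : (insert a T).Nonempty then (insert a T).inf' h F else 1)
        = min (F a) M := by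
      rw [dif_pos (Finset.insert_nonempty _ _)]
      rcases T.eq_empty_or_nonempty with he | hne
      · rw [he]
        rw [hM, dif_neg (by simp [he])]
        rw [min_eq_left hFa.2]
        exact Finset.inf'_singleton F (b := a)
      · rw [Finset.inf'_insert hne]
        rw [hM, dif_pos hne]
    have E3 : (if h : ((insert a s) \ (insert a T)).Nonempty
        then ((insert a s) \ (insert a T)).sup' h F else 0) = X := by
      rw [hX]
      congr 1 <;> rw [e2]
    rw [E1, E2, E3]
    rw [add_comm]
    exact tri_identity (F a) M X

variable {m N : ℕ}

/-- The lattice point associated to an "upper set" `T`. -/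
noncomputable def zT (N : ℕ) (p : Fin m → unitInterval) (hN : 0 < N)
    (T : Finset (Fin m)) : Fin m → Fin (N + 1) :=
  fun i => ⟨aflr N p i + (if i ∈ T then 1 else 0), by
    have := aflr_le hN p i
    by_cases h : i ∈ T <;> simp [h] <;> omega⟩

lemma dd_zT (p : Fin m → unitInterval) (hN : 0 < N) (T : Finset (Fin m)) (i : Fin m) :
    ddf N (zT N p hN T) p i = fpart N p i - (if i ∈ T then 1 else 0) := by
  unfold ddf zT fpart
  by_cases h : i ∈ T <;> simp [h] <;> push_cast <;> ring

variable (hu : (Finset.univ : Finset (Fin m)).Nonempty) (hN : 0 < N)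
  (p : Fin m → unitInterval)

lemma min0inf_zT (T : Finset (Fin m)) :
    min 0 (Finset.univ.inf' hu (ddf N (zT N p hN T) p))
      = (if h : T.Nonempty then T.inf' h (fpart N p) else 1) - 1 := by
  rcases T.eq_empty_or_nonempty with he | hne
  · rw [dif_neg (by simp [he])]
    have : ∀ i ∈ Finset.univ, (0:ℝ) ≤ ddf N (zT N p hN T) p i := by
      intro i _
      rw [dd_zT, he]
      simpa using fpart_nonneg p i
    rw [min_eq_left (Finset.le_inf' hu _ this)]
    ring
  · rw [dif_pos hne]
    obtain ⟨t₀, ht₀⟩ := hne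
    apply le_antisymm
    · have key : min 0 (Finset.univ.inf' hu (ddf N (zT N p hN T) p)) + 1
          ≤ T.inf' ⟨t₀, ht₀⟩ (fpart N p) := by
        apply Finset.le_inf'
        intro i hi
        have h1 : Finset.univ.inf' hu (ddf N (zT N p hN T) p) ≤ ddf N (zT N p hN T) p i :=
          Finset.inf'_le _ (Finset.mem_univ i)
        rw [dd_zT, if_pos hi] at h1
        have := min_le_right (0:ℝ) (Finset.univ.inf' hu (ddf N (zT N p hN T) p))
        linarith
      linarith
    · apply le_min
      · have h1 : T.inf' ⟨t₀, ht₀⟩ (fpart N p) ≤ fpart N p t₀ :=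
          Finset.inf'_le _ ht₀
        have := fpart_le_one hN p t₀
        linarith
      · apply Finset.le_inf'
        intro i _
        rw [dd_zT]
        by_cases hi : i ∈ T
        · rw [if_pos hi]
          have : T.inf' ⟨t₀, ht₀⟩ (fpart N p) ≤ fpart N p i := Finset.inf'_le _ hi
          linarith
        · rw [if_neg hi]
          have h1 : T.inf' ⟨t₀, ht₀⟩ (fpart N p) ≤ fpart N p t₀ := Finset.inf'_le _ ht₀
          have h2 := fpart_le_one hN p t₀
          have h3 := fpart_nonneg (N := N) p i
          linarith

lemma max0sup_zT (T : Finset (Fin m)) :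
    max 0 (Finset.univ.sup' hu (ddf N (zT N p hN T) p))
      = (if h : (Finset.univ \ T).Nonempty
          then (Finset.univ \ T).sup' h (fpart N p) else 0) := by
  rcases (Finset.univ \ T).eq_empty_or_nonempty with he | hne
  · rw [dif_neg (by simp [he])]
    have hTuniv : ∀ i : Fin m, i ∈ T := by
      intro i
      by_contra hi
      have : i ∈ Finset.univ \ T := Finset.mem_sdiff.mpr ⟨Finset.mem_univ i, hi⟩
      rw [he] at this
      exact absurd this (Finset.notMem_empty i)
    apply max_eq_left
    apply Finset.sup'_le
    intro i _
    rw [dd_zT, if_pos (hTuniv i)]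
    have := fpart_le_one hN p i
    linarith
  · rw [dif_pos hne]
    obtain ⟨j₀, hj₀⟩ := hne
    apply le_antisymm
    · apply max_le
      · have h1 : fpart N p j₀ ≤ (Finset.univ \ T).sup' ⟨j₀, hj₀⟩ (fpart N p) :=
          Finset.le_sup' _ hj₀
        have := fpart_nonneg (N := N) p j₀
        linarith
      · apply Finset.sup'_le
        intro i _
        rw [dd_zT]
        by_cases hi : i ∈ T
        · rw [if_pos hi]
          have h1 : fpart N p j₀ ≤ (Finset.univ \ T).sup' ⟨j₀, hj₀⟩ (fpart N p) :=
            Finset.le_sup' _ hj₀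
          have h2 := fpart_nonneg (N := N) p j₀
          have h3 := fpart_le_one hN p i
          linarith
        · rw [if_neg hi, sub_zero]
          exact Finset.le_sup' (fpart N p) (Finset.mem_sdiff.mpr ⟨Finset.mem_univ i, hi⟩)
    · apply Finset.sup'_le
      intro j hj
      rw [Finset.mem_sdiff] at hj
      have h1 : ddf N (zT N p hN T) p j ≤ Finset.univ.sup' hu (ddf N (zT N p hN T) p) :=
        Finset.le_sup' _ (Finset.mem_univ j)
      rw [dd_zT, if_neg hj.2] at h1
      have h2 := le_max_right (0:ℝ) (Finset.univ.sup' hu (ddf N (zT N p hN T) p))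
      linarith

lemma hatf_zT (T : Finset (Fin m)) :
    hatf hu N (zT N p hN T) p
      = max 0 ((if h : T.Nonempty then T.inf' h (fpart N p) else 1)
        - (if h : (Finset.univ \ T).Nonempty
            then (Finset.univ \ T).sup' h (fpart N p) else 0)) := by
  unfold hatf
  rw [min0inf_zT hu hN p T, max0sup_zT hu hN p T]
  congr 1
  ring

lemma zT_inj : Set.InjOn (zT N p hN) (Finset.univ.powerset : Finset (Finset (Fin m))) := by
  intro T _ T' _ h
  ext i
  have := congrFun h i
  have hval : aflr N p i + (if i ∈ T then 1 else 0)
      = aflr N p i + (if i ∈ T' then 1 else 0) := congrArg Fin.val this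
  by_cases h1 : i ∈ T <;> by_cases h2 : i ∈ T' <;> simp [h1, h2] at hval ⊢

lemma zT_of_ne (z : Fin m → Fin (N + 1)) (h : hatf hu N z p ≠ 0) :
    z = zT N p hN (Finset.univ.filter fun i => (z i : ℕ) = aflr N p i + 1) := by
  funext i
  apply Fin.ext
  have hval : ((zT N p hN (Finset.univ.filter fun j => (z j : ℕ) = aflr N p j + 1) i) : ℕ)
      = aflr N p i + (if (z i : ℕ) = aflr N p i + 1 then 1 else 0) := by
    show aflr N p i + _ = aflr N p i + _
    congr 1
    by_cases h1 : (z i : ℕ) = aflr N p i + 1 <;> simp [h1]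
  rw [hval]
  rcases hatf_support_nat hN z p h i with h1 | h1
  · rw [if_neg (by omega)]
    omega
  · rw [if_pos h1]
    omega

lemma sum_hatf (hN' : 0 < N) : ∑ z : Fin m → Fin (N + 1), hatf hu N z p = 1 := by
  classical
  have himg : ∀ z : Fin m → Fin (N + 1), hatf hu N z p ≠ 0 →
      z ∈ Finset.univ.powerset.image (zT N p hN') := by
    intro z hz
    rw [Finset.mem_image]
    exact ⟨_, Finset.mem_powerset.mpr (Finset.subset_univ _),
      (zT_of_ne hu hN' p z hz).symm⟩
  rw [← Finset.sum_subset (Finset.subset_univ (Finset.univ.powerset.image (zT N p hN')))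
    (fun z _ hz => by_contra fun h => hz (himg z h))]
  rw [Finset.sum_image (fun T hT T' hT' h => zT_inj hN' p (by exact_mod_cast hT)
    (by exact_mod_cast hT') h)]
  have : ∀ T ∈ Finset.univ.powerset, hatf hu N (zT N p hN' T) p
      = max 0 ((if h : T.Nonempty then T.inf' h (fpart N p) else 1)
        - (if h : (Finset.univ \ T).Nonempty
            then (Finset.univ \ T).sup' h (fpart N p) else 0)) :=
    fun T _ => hatf_zT hu hN' p T
  rw [Finset.sum_congr rfl this]
  exact sum1 Finset.univ (fpart N p)
    (fun i _ => ⟨fpart_nonneg p i, fpart_le_one hN' p i⟩)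

lemma hatf_card (hN' : 0 < N) :
    ((Finset.univ.filter fun z : Fin m → Fin (N + 1) => hatf hu N z p ≠ 0).card ≤ m + 1) := by
  classical
  set A := Finset.univ.filter fun z : Fin m → Fin (N + 1) => hatf hu N z p ≠ 0 with hA
  set Tof : (Fin m → Fin (N + 1)) → Finset (Fin m) :=
    fun z => Finset.univ.filter fun i => (z i : ℕ) = aflr N p i + 1 with hTof
  have hz_ne : ∀ z ∈ A, hatf hu N z p ≠ 0 := by
    intro z hz; rw [hA, Finset.mem_filter] at hz; exact hz.2
  have hFiFj : ∀ z ∈ A, ∀ i ∈ Tof z, ∀ j ∉ Tof z,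
      fpart N p j < fpart N p i := by
    intro z hz i hi j hj
    have hne := hz_ne z hz
    have hpos := hatf_pos_of_ne (hu := hu) z p hne
    have hdi : ddf N z p i = fpart N p i - 1 := by
      rw [hTof, Finset.mem_filter] at hi
      unfold ddf fpart
      rw [hi.2]
      push_cast
      ring
    have hdj : ddf N z p j = fpart N p j := by
      have := hatf_support_nat hN' z p hne j
      rcases this with h1 | h1
      · unfold ddf fpart
        rw [h1]
      · exfalso
        exact hj (by rw [hTof]; simp [h1])
    have h1 : Finset.univ.inf' hu (ddf N z p) ≤ ddf N z p i :=
      Finset.inf'_le _ (Finset.mem_univ i)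
    have h2 : ddf N z p j ≤ Finset.univ.sup' hu (ddf N z p) :=
      Finset.le_sup' _ (Finset.mem_univ j)
    have h3 : min 0 (Finset.univ.inf' hu (ddf N z p)) ≤ ddf N z p i :=
      le_trans (min_le_right _ _) h1
    have h4 : ddf N z p j ≤ max 0 (Finset.univ.sup' hu (ddf N z p)) :=
      le_trans h2 (le_max_right _ _)
    rw [hdi] at h3
    rw [hdj] at h4
    linarith
  have hchain : ∀ z ∈ A, ∀ z' ∈ A, Tof z ⊆ Tof z' ∨ Tof z' ⊆ Tof z := by
    intro z hz z' hz'
    by_contra hc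
    push_neg at hc
    obtain ⟨i, hi1, hi2⟩ := Finset.not_subset.mp hc.1
    obtain ⟨j, hj1, hj2⟩ := Finset.not_subset.mp hc.2
    have k1 := hFiFj z hz i hi1 j hj2
    have k2 := hFiFj z' hz' j hj1 i hi2
    linarith
  have hinj : Set.InjOn (fun z => (Tof z).card) (A : Set (Fin m → Fin (N + 1))) := by
    intro z hz z' hz' hcard
    have hz'' : z ∈ A := by exact_mod_cast hz
    have hz''' : z' ∈ A := by exact_mod_cast hz'
    have hT : Tof z = Tof z' := by
      rcases hchain z hz'' z' hz''' with h | h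
      · exact Finset.eq_of_subset_of_card_le h (le_of_eq hcard.symm)
      · exact (Finset.eq_of_subset_of_card_le h (le_of_eq hcard)).symm
    rw [zT_of_ne hu hN' p z (hz_ne z hz''), zT_of_ne hu hN' p z' (hz_ne z' hz''')]
    exact congrArg (zT N p hN') hT
  calc A.card = (A.image fun z => (Tof z).card).card :=
        (Finset.card_image_of_injOn hinj).symm
  _ ≤ (Finset.range (m + 1)).card := by
      apply Finset.card_le_card
      intro c hc
      rw [Finset.mem_image] at hc
      obtain ⟨z, _, rfl⟩ := hc
      rw [Finset.mem_range]
      have : (Tof z).card ≤ (Finset.univ : Finset (Fin m)).card :=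
        Finset.card_le_card (Finset.filter_subset _ _)
      rw [Finset.card_univ, Fintype.card_fin] at this
      omega
  _ = m + 1 := Finset.card_range _

end HatSum

section Cover

variable {V : Type} [Fintype V] {G : SimpleGraph V} {m : ℕ}

lemma isClosed_cube_boundary : IsClosed (Cube.boundary (Fin m)) := by
  have : Cube.boundary (Fin m) = ⋃ i : Fin m,
      ((fun p : Fin m → unitInterval => p i) ⁻¹' {0}
        ∪ (fun p : Fin m → unitInterval => p i) ⁻¹' {1}) := by
    ext p
    simp [Cube.boundary]
  rw [this]
  apply isClosed_iUnion_of_finite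
  intro i
  exact (isClosed_singleton.preimage (continuous_apply i)).union
    (isClosed_singleton.preimage (continuous_apply i))

lemma exists_partition (hm : 0 < m) (S : Spread G m)
    (φ : C(Fin m → unitInterval, G.indepComplex.space))
    (x : G.indepComplex.space) (hbd : ∀ p ∈ Cube.boundary (Fin m), φ p = x) :
    ∃ (af : (Fin m → unitInterval) → Fin (m + 2) → ℝ) (i₀ : Fin (m + 2)),
      (∀ i, Continuous fun p => af p i) ∧
      (∀ p, GoodA S (af p) (φ p)) ∧
      (∀ p ∈ Cube.boundary (Fin m), af p = fun i => if i = i₀ then 1 else 0) := by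
  classical
  have hu : (Finset.univ : Finset (Fin m)).Nonempty := ⟨⟨0, hm⟩, Finset.mem_univ _⟩
  set t : ℝ := 1 / (m + 1) with ht
  set O : Fin (m + 2) → Set (Fin m → unitInterval) :=
    fun i => φ ⁻¹' {q | lam S i q < t} with hO
  have hOopen : ∀ i, IsOpen (O i) := fun i =>
    ((isOpen_Iio (a := t)).preimage (continuous_lam S i)).preimage φ.continuous
  have hOcover : (Set.univ : Set (Fin m → unitInterval)) ⊆ ⋃ i, O i := by
    intro p _
    obtain ⟨i, hi⟩ := exists_lam_lt S (φ p) (one_lt_aux m)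
    exact Set.mem_iUnion.mpr ⟨i, hi⟩
  obtain ⟨δ₁, hδ₁pos, hδ₁⟩ := lebesgue_number_lemma_of_metric isCompact_univ hOopen hOcover
  obtain ⟨i₀, hi₀⟩ := exists_lam_lt S x (one_lt_aux m)
  have hbZ : Cube.boundary (Fin m) ⊆ O i₀ := fun p hp => by
    show lam S i₀ (φ p) < t
    rw [hbd p hp]
    exact hi₀
  set c2 : Bool → Set (Fin m → unitInterval) :=
    fun b => if b then O i₀ else (Cube.boundary (Fin m))ᶜ with hc2
  have hc2open : ∀ b, IsOpen (c2 b) := by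
    rintro (_ | _)
    · simpa [hc2] using isClosed_cube_boundary.isOpen_compl
    · simpa [hc2] using hOopen i₀
  have hc2cover : (Set.univ : Set (Fin m → unitInterval)) ⊆ ⋃ b, c2 b := by
    intro p _
    by_cases hp : p ∈ Cube.boundary (Fin m)
    · exact Set.mem_iUnion.mpr ⟨true, by simpa [hc2] using hbZ hp⟩
    · exact Set.mem_iUnion.mpr ⟨false, by simpa [hc2] using hp⟩
  obtain ⟨δ₂, hδ₂pos, hδ₂⟩ := lebesgue_number_lemma_of_metric isCompact_univ hc2open hc2cover
  obtain ⟨N', hN'⟩ := exists_nat_one_div_lt (lt_min hδ₁pos hδ₂pos)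
  set N := N' + 1 with hNdef
  have hNpos : 0 < N := Nat.succ_pos _
  have hN1 : 1 / (N : ℝ) < min δ₁ δ₂ := by
    rw [hNdef]
    push_cast
    exact hN'
  have hNr : (0:ℝ) < N := by positivity
  have hz1 : ∀ z : Fin m → Fin (N + 1), ∀ i, ((z i : ℕ) : ℝ) / N ∈ Set.Icc (0:ℝ) 1 := by
    intro z i
    constructor
    · positivity
    · rw [div_le_one hNr]
      have h2 : (z i : ℕ) ≤ N := Nat.lt_succ_iff.mp (z i).2
      exact_mod_cast h2
  set ctr : (Fin m → Fin (N + 1)) → (Fin m → unitInterval) :=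
    fun z i => ⟨((z i : ℕ) : ℝ) / N, hz1 z i⟩ with hctr
  have hnear : ∀ z p, hatf hu N z p ≠ 0 → dist p (ctr z) < 1 / N := by
    intro z p hz
    rw [dist_pi_lt_iff (by positivity)]
    intro i
    rw [Subtype.dist_eq, Real.dist_eq]
    have hsupp := hatf_support z p hz i
    unfold ddf at hsupp
    rw [abs_lt] at hsupp ⊢
    have heq : (p i : ℝ) - ((ctr z i : ℝ)) = ((N:ℝ) * (p i : ℝ) - (z i : ℕ)) / N := by
      rw [hctr]
      field_simp
    rw [heq]
    constructor
    · rw [show -(1/(N:ℝ)) = (-1)/N by ring]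
      exact (div_lt_div_iff_of_pos_right hNr).mpr hsupp.1
    · exact (div_lt_div_iff_of_pos_right hNr).mpr hsupp.2
  set col : (Fin m → Fin (N + 1)) → Fin (m + 2) := fun z =>
    if h : Metric.closedBall (ctr z) (1 / N) ⊆ O i₀ then i₀
    else (hδ₁ (ctr z) (Set.mem_univ _)).choose with hcol
  have hcol_spec : ∀ z p, hatf hu N z p ≠ 0 → lam S (col z) (φ p) < t := by
    intro z p hz
    have hd := hnear z p hz
    simp only [hcol]
    by_cases h : Metric.closedBall (ctr z) (1 / N) ⊆ O i₀
    · rw [dif_pos h]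
      exact h (Metric.mem_closedBall.mpr (le_of_lt hd))
    · rw [dif_neg h]
      have hsub := (hδ₁ (ctr z) (Set.mem_univ _)).choose_spec
      have hpin : p ∈ Metric.ball (ctr z) δ₁ := by
        rw [Metric.mem_ball]
        exact lt_trans hd (lt_of_lt_of_le hN1 (min_le_left _ _))
      exact hsub hpin
  have hcol_bdry : ∀ z, (∃ p, p ∈ Cube.boundary (Fin m) ∧ hatf hu N z p ≠ 0) →
      col z = i₀ := by
    rintro z ⟨p, hp, hz⟩
    have hd := hnear z p hz
    obtain ⟨b, hb⟩ := hδ₂ (ctr z) (Set.mem_univ _)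
    have hbtrue : Metric.ball (ctr z) δ₂ ⊆ O i₀ := by
      cases b
      · exfalso
        have hpin : p ∈ Metric.ball (ctr z) δ₂ := by
          rw [Metric.mem_ball]
          exact lt_trans hd (lt_of_lt_of_le hN1 (min_le_right _ _))
        have h2 := hb hpin
        rw [hc2] at h2
        simp at h2
        exact h2 hp
      · simpa [hc2] using hb
    have hcball : Metric.closedBall (ctr z) (1 / N) ⊆ O i₀ := by
      intro y hy
      apply hbtrue
      rw [Metric.mem_ball]
      exact lt_of_le_of_lt (Metric.mem_closedBall.mp hy)
        (lt_of_lt_of_le hN1 (min_le_right _ _))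
    simp only [hcol]
    rw [dif_pos hcball]
  refine ⟨fun p i => ∑ z, if col z = i then hatf hu N z p else 0, i₀, ?_, ?_, ?_⟩
  · intro i
    apply continuous_finset_sum
    intro z _
    by_cases h : col z = i
    · simpa [h] using continuous_hatf (hu := hu) z
    · simp [h]
      exact continuous_const
  · intro p
    constructor
    · intro i
      apply Finset.sum_nonneg
      intro z _
      by_cases h : col z = i <;> simp [h, hatf_nonneg z p]
    · rw [Finset.sum_comm]
      have hinner : ∀ z : Fin m → Fin (N + 1),
          ∑ i, (if col z = i then hatf hu N z p else 0) = hatf hu N z p := by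
        intro z
        rw [Finset.sum_ite_eq Finset.univ (col z) (fun _ => hatf hu N z p)]
        simp
      rw [Finset.sum_congr rfl (fun z _ => hinner z)]
      exact sum_hatf hu p hNpos
    · intro i hi
      obtain ⟨z, _, hz⟩ := Finset.exists_ne_zero_of_sum_ne_zero hi
      have hcz : col z = i := by
        by_contra h
        rw [if_neg h] at hz
        exact hz rfl
      have hhz : hatf hu N z p ≠ 0 := by
        rw [if_pos hcz] at hz
        exact hz
      have := hcol_spec z p hhz
      rw [hcz] at this
      exact lam_small_good S (φ p) this
    · set Act := Finset.univ.filter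
        (fun i => (∑ z, if col z = i then hatf hu N z p else 0) ≠ 0) with hAct
      have hch : ∀ i, i ∈ Act → ∃ z, col z = i ∧ hatf hu N z p ≠ 0 := by
        intro i hi
        rw [hAct, Finset.mem_filter] at hi
        obtain ⟨z, _, hz⟩ := Finset.exists_ne_zero_of_sum_ne_zero hi.2
        have hcz : col z = i := by
          by_contra h
          rw [if_neg h] at hz
          exact hz rfl
        rw [if_pos hcz] at hz
        exact ⟨z, hcz, hz⟩
      set g : Fin (m + 2) → (Fin m → Fin (N + 1)) := fun i =>
        if h : ∃ z, col z = i ∧ hatf hu N z p ≠ 0 then h.choose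
        else (fun _ => ⟨0, by omega⟩) with hg
      have hgmem : ∀ i ∈ Act, g i ∈ Finset.univ.filter
          (fun z : Fin m → Fin (N + 1) => hatf hu N z p ≠ 0) := by
        intro i hi
        have h := hch i hi
        simp only [hg]
        rw [dif_pos h]
        rw [Finset.mem_filter]
        exact ⟨Finset.mem_univ _, h.choose_spec.2⟩
      have hginj : ∀ i ∈ Act, ∀ j ∈ Act, g i = g j → i = j := by
        intro i hi j hj hgij
        have h1 := hch i hi
        have h2 := hch j hj
        have e1 : col (g i) = i := by
          simp only [hg]; rw [dif_pos h1]; exact h1.choose_spec.1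
        have e2 : col (g j) = j := by
          simp only [hg]; rw [dif_pos h2]; exact h2.choose_spec.1
        rw [← e1, ← e2, hgij]
      calc Act.card ≤ (Finset.univ.filter
            (fun z : Fin m → Fin (N + 1) => hatf hu N z p ≠ 0)).card :=
          Finset.card_le_card_of_injOn g hgmem (fun i hi j hj h =>
            hginj i (by exact_mod_cast hi) j (by exact_mod_cast hj) h)
      _ ≤ m + 1 := hatf_card hu p hNpos
  · intro p hp
    funext i
    show (∑ z, if col z = i then hatf hu N z p else 0) = (if i = i₀ then (1:ℝ) else 0)
    have hz0 : ∀ z, hatf hu N z p ≠ 0 → col z = i₀ := fun z hz =>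
      hcol_bdry z ⟨p, hp, hz⟩
    by_cases hi : i = i₀
    · rw [hi, if_pos rfl]
      have : ∀ z ∈ (Finset.univ : Finset (Fin m → Fin (N + 1))),
          (if col z = i₀ then hatf hu N z p else 0) = hatf hu N z p := by
        intro z _
        by_cases hcz : col z = i₀
        · rw [if_pos hcz]
        · rw [if_neg hcz]
          by_cases hhz : hatf hu N z p = 0
          · rw [hhz]
          · exact absurd (hz0 z hhz) hcz
      rw [Finset.sum_congr rfl this]
      exact sum_hatf hu p hNpos
    · rw [if_neg hi]
      apply Finset.sum_eq_zero
      intro z _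
      by_cases hcz : col z = i
      · by_cases hhz : hatf hu N z p = 0
        · rw [if_pos hcz, hhz]
        · exact absurd (hz0 z hhz) (by rw [hcz]; exact hi)
      · rw [if_neg hcz]

end Cover

section MainPos

variable {V : Type} [Fintype V] {G : SimpleGraph V}

noncomputable def ufn {m : ℕ} (hu : (Finset.univ : Finset (Fin m)).Nonempty)
    (p : Fin m → unitInterval) : ℝ :=
  Finset.univ.inf' hu fun i => min (p i : ℝ) (1 - (p i : ℝ))

lemma ufn_nonneg {m : ℕ} (hu : (Finset.univ : Finset (Fin m)).Nonempty)
    (p : Fin m → unitInterval) : 0 ≤ ufn hu p := by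
  apply Finset.le_inf'
  intro i _
  have h1 := (p i).2.1
  have h2 := (p i).2.2
  exact le_min h1 (by linarith)

lemma ufn_cont {m : ℕ} (hu : (Finset.univ : Finset (Fin m)).Nonempty) :
    Continuous (ufn hu) := by
  apply continuous_finset_inf' hu
  intro i
  exact ((continuous_subtype_val.comp (continuous_apply i)).min
    (continuous_const.sub (continuous_subtype_val.comp (continuous_apply i))))

lemma ufn_boundary {m : ℕ} (hu : (Finset.univ : Finset (Fin m)).Nonempty)
    (p : Fin m → unitInterval) (hp : p ∈ Cube.boundary (Fin m)) : ufn hu p = 0 := by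
  obtain ⟨i, hi⟩ := hp
  apply le_antisymm
  · have : ufn hu p ≤ min (p i : ℝ) (1 - (p i : ℝ)) :=
      Finset.inf'_le _ (Finset.mem_univ i)
    rcases hi with h | h
    · rw [h] at this
      simpa using le_trans this (min_le_left _ _)
    · rw [h] at this
      simpa using le_trans this (min_le_right _ _)
  · exact ufn_nonneg hu p

noncomputable def rescf {m : ℕ} (s : unitInterval) (p : Fin m → unitInterval) :
    Fin m → unitInterval := fun i =>
  Set.projIcc 0 1 zero_le_one (((p i : ℝ) - (s : ℝ) / 4) / (1 - (s : ℝ) / 2))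

lemma resc_denom_pos (s : unitInterval) : 0 < 1 - (s : ℝ) / 2 := by
  have := s.2.2
  linarith

lemma rescf_zero {m : ℕ} (p : Fin m → unitInterval) : rescf 0 p = p := by
  funext i
  unfold rescf
  have h0 : ((0 : unitInterval) : ℝ) = 0 := rfl
  rw [h0]
  have : ((p i : ℝ) - 0 / 4) / (1 - 0 / 2) = (p i : ℝ) := by norm_num
  rw [this, Set.projIcc_of_mem zero_le_one (p i).2]

lemma rescf_cont {m : ℕ} :
    Continuous fun y : unitInterval × (Fin m → unitInterval) => rescf y.1 y.2 := by
  apply continuous_pi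
  intro i
  apply continuous_projIcc.comp
  apply Continuous.div
  · exact (continuous_subtype_val.comp ((continuous_apply i).comp continuous_snd)).sub
      ((continuous_subtype_val.comp continuous_fst).div_const 4)
  · exact continuous_const.sub ((continuous_subtype_val.comp continuous_fst).div_const 2)
  · intro y
    exact (resc_denom_pos y.1).ne'

lemma rescf_boundary {m : ℕ} (hu : (Finset.univ : Finset (Fin m)).Nonempty)
    (s : unitInterval) (p : Fin m → unitInterval) (h : ufn hu p = (s : ℝ) / 4) :
    rescf s p ∈ Cube.boundary (Fin m) := by
  obtain ⟨i, _, hi⟩ := Finset.exists_mem_eq_inf' hu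
    (fun i => min (p i : ℝ) (1 - (p i : ℝ)))
  have hd := resc_denom_pos s
  rcases le_total (p i : ℝ) (1 - (p i : ℝ)) with hc | hc
  · rw [min_eq_left hc] at hi
    have hpi : (p i : ℝ) = (s : ℝ) / 4 := by
      rw [← hi, ← h]
      rfl
    refine ⟨i, Or.inl ?_⟩
    show rescf s p i = 0
    unfold rescf
    rw [hpi]
    have : ((s : ℝ) / 4 - (s : ℝ) / 4) / (1 - (s : ℝ) / 2) = 0 := by ring
    rw [this]
    apply Subtype.ext
    show (Set.projIcc 0 1 zero_le_one (0:ℝ) : ℝ) = 0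
    rw [Set.projIcc_of_mem zero_le_one (Set.left_mem_Icc.mpr zero_le_one)]
  · rw [min_eq_right hc] at hi
    have hpi : (p i : ℝ) = 1 - (s : ℝ) / 4 := by
      have : 1 - (p i : ℝ) = (s : ℝ) / 4 := by rw [← hi, ← h]; rfl
      linarith
    refine ⟨i, Or.inr ?_⟩
    show rescf s p i = 1
    unfold rescf
    rw [hpi]
    have : (1 - (s : ℝ) / 4 - (s : ℝ) / 4) / (1 - (s : ℝ) / 2) = 1 := by
      rw [div_eq_one_iff_eq hd.ne']
      ring
    rw [this]
    apply Subtype.ext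
    show (Set.projIcc 0 1 zero_le_one (1:ℝ) : ℝ) = 1
    rw [Set.projIcc_of_mem zero_le_one (Set.right_mem_Icc.mpr zero_le_one)]

set_option maxHeartbeats 2000000 in
lemma genloop_null_dim_pos (m : ℕ) (hm : 0 < m) (S : Spread G m)
    (x : G.indepComplex.space) (f : GenLoop (Fin m) G.indepComplex.space x) :
    GenLoop.Homotopic f GenLoop.const := by
  classical
  have hu : (Finset.univ : Finset (Fin m)).Nonempty := ⟨⟨0, hm⟩, Finset.mem_univ _⟩
  obtain ⟨af, i₀, hafc, hafA, hafB⟩ := exists_partition hm S f.1 x f.2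
  set qf : unitInterval × (Fin m → unitInterval) → G.indepComplex.space :=
    fun y => f.1 y.2 with hqf
  set afY : unitInterval × (Fin m → unitInterval) → Fin (m + 2) → ℝ :=
    fun y => af y.2 with hafY
  set θf : unitInterval × (Fin m → unitInterval) → ℝ := fun y => (y.1 : ℝ) with hθf
  have hA : ∀ y, GoodA S (afY y) (qf y) := fun y => hafA y.2
  have hθ : ∀ y, 0 ≤ θf y ∧ θf y ≤ 1 := fun y => ⟨y.1.2.1, y.1.2.2⟩
  set bigH := bigHmap S qf afY θf hA hθ with hbigH
  have hcont : Continuous bigH := continuous_bigHmap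
    (f.1.continuous.comp continuous_snd)
    (fun i => (hafc i).comp continuous_snd)
    (continuous_subtype_val.comp continuous_fst)
  have hbH0 : ∀ p, bigH (0, p) = f.1 p := fun p =>
    bigHmap_theta_zero (hA := hA) (hθ := hθ) rfl
  have hbH1 : ∀ p, bigH (1, p) = vertexPt (S.w 0) := fun p =>
    bigHmap_theta_one (hA := hA) (hθ := hθ) rfl
  set pb : Fin m → unitInterval := fun _ => 0 with hpb
  have hpbB : pb ∈ Cube.boundary (Fin m) := ⟨⟨0, hm⟩, Or.inl rfl⟩
  set γ : unitInterval → G.indepComplex.space := fun s => bigH (s, pb) with hγ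
  have hγcont : Continuous γ := hcont.comp (continuous_id.prodMk continuous_const)
  have hγbd : ∀ (s : unitInterval) (p), p ∈ Cube.boundary (Fin m) →
      bigH (s, p) = γ s := by
    intro s p hp
    apply bigHmap_congr (hA := hA) (hθ := hθ)
    · show f.1 p = f.1 pb
      rw [f.2 p hp, f.2 pb hpbB]
    · show af p = af pb
      rw [hafB p hp, hafB pb hpbB]
    · rfl
  have hγ0 : γ 0 = x := by
    show bigH (0, pb) = x
    rw [hbH0 pb]
    exact f.2 pb hpbB
  have hγ1 : γ 1 = vertexPt (S.w 0) := hbH1 pb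
  set u : (Fin m → unitInterval) → ℝ := fun p => ufn hu p with hud
  set pj : ℝ → unitInterval := fun r => Set.projIcc 0 1 zero_le_one r with hpj
  have hpjc : Continuous pj := continuous_projIcc
  -- the first homotopy K
  set fone : (Fin m → unitInterval) → G.indepComplex.space :=
    fun p => γ (pj (min (4 * u p) 1)) with hfone
  have hfonec : Continuous fone := hγcont.comp (hpjc.comp
    ((continuous_const.mul (ufn_cont hu)).min continuous_const))
  set Kf : unitInterval × (Fin m → unitInterval) → G.indepComplex.space :=
    fun y => if (y.1 : ℝ) / 4 ≤ u y.2 then bigH (y.1, rescf y.1 y.2)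
      else γ (pj (min (4 * u y.2) (y.1 : ℝ))) with hKf
  have hKcont : Continuous Kf := by
    apply Continuous.if_le
    · exact hcont.comp (continuous_fst.prodMk rescf_cont)
    · exact hγcont.comp (hpjc.comp ((continuous_const.mul
        ((ufn_cont hu).comp continuous_snd)).min
        (continuous_subtype_val.comp continuous_fst)))
    · exact (continuous_subtype_val.comp continuous_fst).div_const 4
    · exact (ufn_cont hu).comp continuous_snd
    · intro y hy
      have hB := rescf_boundary hu y.1 y.2 hy.symm
      rw [hγbd y.1 _ hB]
      have h4u : min (4 * u y.2) ((y.1 : ℝ)) = (y.1 : ℝ) := by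
        have : 4 * u y.2 = (y.1 : ℝ) := by rw [← hy]; ring
        rw [this, min_self]
      rw [h4u]
      congr 1
      apply Subtype.ext
      show (y.1 : ℝ) = (Set.projIcc 0 1 zero_le_one ((y.1 : ℝ)) : ℝ)
      rw [Set.projIcc_of_mem zero_le_one y.1.2]
  have hpj0 : pj 0 = 0 := by
    apply Subtype.ext
    show (Set.projIcc 0 1 zero_le_one (0:ℝ) : ℝ) = 0
    rw [Set.projIcc_of_mem zero_le_one (Set.left_mem_Icc.mpr zero_le_one)]
  have hpj1 : pj 1 = 1 := by
    apply Subtype.ext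
    show (Set.projIcc 0 1 zero_le_one (1:ℝ) : ℝ) = 1
    rw [Set.projIcc_of_mem zero_le_one (Set.right_mem_Icc.mpr zero_le_one)]
  have hc10 : ((0 : unitInterval) : ℝ) = 0 := rfl
  have hc11 : ((1 : unitInterval) : ℝ) = 1 := rfl
  have hK0 : ∀ p, Kf (0, p) = f.1 p := by
    intro p
    simp only [hKf]
    rw [if_pos (by rw [hc10]; simpa using ufn_nonneg hu p)]
    show bigH (0, rescf 0 p) = f.1 p
    rw [rescf_zero, hbH0]
  have hK1 : ∀ p, Kf (1, p) = fone p := by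
    intro p
    simp only [hKf]
    by_cases hcond : ((1 : unitInterval) : ℝ) / 4 ≤ u p
    · rw [if_pos hcond]
      show bigH (1, rescf 1 p) = fone p
      rw [hbH1]
      simp only [hfone]
      have hmin : min (4 * u p) (1:ℝ) = 1 := by
        rw [hc11] at hcond
        exact min_eq_right (by linarith)
      rw [hmin, hpj1, hγ1]
    · rw [if_neg hcond]
      simp only [hfone, hc11]
  have hKrel : ∀ (t : unitInterval) (p), p ∈ Cube.boundary (Fin m) →
      Kf (t, p) = f.1 p := by
    intro t p hp
    have hu0 : u p = 0 := ufn_boundary hu p hp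
    have hfp : f.1 p = x := f.2 p hp
    simp only [hKf]
    by_cases hcond : (t : ℝ) / 4 ≤ u p
    · rw [if_pos hcond]
      have ht0 : t = 0 := by
        apply Subtype.ext
        rw [hu0] at hcond
        have := t.2.1
        show (t:ℝ) = ((0 : unitInterval) : ℝ)
        rw [hc10]
        linarith
      rw [ht0]
      show bigH (0, rescf 0 p) = f.1 p
      rw [rescf_zero, hbH0]
    · rw [if_neg hcond]
      rw [hu0]
      have hm0 : min (4 * (0:ℝ)) ((t : ℝ)) = 0 := by
        rw [mul_zero]
        exact min_eq_left t.2.1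
      rw [hm0, hpj0, hγ0, hfp]
  set Lf : unitInterval × (Fin m → unitInterval) → G.indepComplex.space :=
    fun y => γ (pj ((1 - (y.1 : ℝ)) * min (4 * u y.2) 1)) with hLf
  have hLcont : Continuous Lf := hγcont.comp (hpjc.comp
    ((continuous_const.sub (continuous_subtype_val.comp continuous_fst)).mul
      ((continuous_const.mul ((ufn_cont hu).comp continuous_snd)).min continuous_const)))
  have hL0 : ∀ p, Lf (0, p) = fone p := by
    intro p
    simp only [hLf, hfone, hc10]
    norm_num
  have hL1 : ∀ p, Lf (1, p) = x := by
    intro p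
    simp only [hLf, hc11]
    norm_num [hpj0, hγ0]
  have hLrel : ∀ (t : unitInterval) (p), p ∈ Cube.boundary (Fin m) →
      Lf (t, p) = fone p := by
    intro t p hp
    have hu0 : u p = 0 := ufn_boundary hu p hp
    simp only [hLf, hfone, hu0]
    norm_num
  set fonecm : C(Fin m → unitInterval, G.indepComplex.space) := ⟨fone, hfonec⟩
  refine ⟨ContinuousMap.HomotopyRel.trans
    ({ toFun := Kf, continuous_toFun := hKcont,
       map_zero_left := hK0, map_one_left := hK1,
       prop' := fun t p hp => hKrel t p hp } :
      ContinuousMap.HomotopyRel f.1 fonecm (Cube.boundary (Fin m)))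
    ({ toFun := Lf, continuous_toFun := hLcont,
       map_zero_left := hL0, map_one_left := hL1,
       prop' := fun t p hp => hLrel t p hp } :
      ContinuousMap.HomotopyRel fonecm (GenLoop.const : GenLoop (Fin m) _ x).1
        (Cube.boundary (Fin m)))⟩

end MainPos


/-- If `G` is connected of diameter `n`, then `I_G` is
`⌊n/3 - 1⌋`-connected. -/
theorem statement18 {V : Type} [Fintype V] (G : SimpleGraph V) (hconn : G.Connected)
    (n : ℕ) (hdiam : G.diam = n) :
    NConnected ((n : ℤ) / 3 - 1) G.indepComplex.space := by
  classical
  have hV : Nonempty V := hconn.nonempty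
  constructor
  · intro _
    exact ⟨vertexPt (Classical.arbitrary V)⟩
  · intro k hk x
    have h3 : 3 * (k + 1) ≤ n := by
      have h1 : (k : ℤ) + 1 ≤ (n : ℤ) / 3 := by omega
      have h2 : ((k : ℤ) + 1) * 3 ≤ (n : ℤ) := (Int.le_ediv_iff_mul_le (by norm_num)).mp h1
      omega
    obtain ⟨u₀, v₀, hd⟩ := SimpleGraph.exists_dist_eq_diam (G := G)
    rw [hdiam] at hd
    obtain ⟨S⟩ := exists_spread hconn hd h3
    have hnull : ∀ g : GenLoop (Fin k) G.indepComplex.space x,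
        GenLoop.Homotopic g GenLoop.const := by
      intro g
      rcases Nat.eq_zero_or_pos k with hk0 | hkpos
      · subst hk0
        exact genloop_null_dim0 S x g
      · exact genloop_null_dim_pos k hkpos S x g
    constructor
    intro a b
    refine Quotient.inductionOn₂ a b fun g h => Quotient.sound ?_
    exact (hnull g).trans (hnull h).symm
end
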